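/- arXiv:1001.4268 — 5 statements merged into one kernel-verified Lean document; each statement's English description precedes it below -/
import Mathlib

section
/- Every 4-connected configuration is brodable. -/
/-- Two vertices of `ℤ²` are adjacent if their Euclidean distance is `1`. -/
def Adj (u v : ℤ × ℤ) : Prop := (u.1 - v.1) ^ 2 + (u.2 - v.2) ^ 2 = 1

/-- The inferior diagonal of the cell `(a, b)`: the unordered pair `{(a,b), (a+1,b+1)}`. -/
def infDiag (c : ℤ × ℤ) : Sym2 (ℤ × ℤ) := s(c, (c.1 + 1, c.2 + 1))

/-- The superior diagonal of the cell `(a, b)`: the unordered pair `{(a,b+1), (a+1,b)}`. -/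
def supDiag (c : ℤ × ℤ) : Sym2 (ℤ × ℤ) := s((c.1, c.2 + 1), (c.1 + 1, c.2))

/-- The unordered pair underlying an ordered pair of vertices. -/
def diagOf (e : (ℤ × ℤ) × (ℤ × ℤ)) : Sym2 (ℤ × ℤ) := s(e.1, e.2)

/-- `d 0, d 1, …, d (2n - 1)` (with `n = C.card`) is an embroidery of the
configuration `C`. -/
def IsEmbroidery (C : Finset (ℤ × ℤ)) (d : ℕ → (ℤ × ℤ) × (ℤ × ℤ)) : Prop :=
  (∀ i < 2 * C.card, ∃ c ∈ C, diagOf (d i) = infDiag c ∨ diagOf (d i) = supDiag c) ∧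
  (∀ c ∈ C, ∃! i, i < 2 * C.card ∧ diagOf (d i) = infDiag c) ∧
  (∀ c ∈ C, ∃! i, i < 2 * C.card ∧ diagOf (d i) = supDiag c) ∧
  (∀ c ∈ C, ∀ i j, i < 2 * C.card → j < 2 * C.card →
    diagOf (d i) = infDiag c → diagOf (d j) = supDiag c → i < j) ∧
  (∀ i, i + 1 < 2 * C.card → Adj (d i).2 (d (i + 1)).1)

/-- A closed embroidery: moreover the end of the last diagonal is adjacent to the
start of the first one. -/
def IsClosedEmbroidery (C : Finset (ℤ × ℤ)) (d : ℕ → (ℤ × ℤ) × (ℤ × ℤ)) : Prop :=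
  IsEmbroidery C d ∧ Adj (d (2 * C.card - 1)).2 (d 0).1

/-- A configuration is brodable if it admits an embroidery. -/
def Brodable (C : Finset (ℤ × ℤ)) : Prop := ∃ d, IsEmbroidery C d

/-- A configuration is strongly brodable if it admits a closed embroidery. -/
def StronglyBrodable (C : Finset (ℤ × ℤ)) : Prop := ∃ d, IsClosedEmbroidery C d

/-- Two cells are 4-adjacent if they differ by `(±1, 0)` or `(0, ±1)`. -/
def FourAdj (p q : ℤ × ℤ) : Prop := (p.1 - q.1) ^ 2 + (p.2 - q.2) ^ 2 = 1

/-- A configuration is 4-connected if it is nonempty and any two of its cells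
are joined by a chain of cells of the configuration in which consecutive cells
are 4-adjacent. -/
def FourConnected (C : Finset (ℤ × ℤ)) : Prop :=
  C.Nonempty ∧ ∀ p ∈ C, ∀ q ∈ C,
    Relation.ReflTransGen (fun a b => a ∈ C ∧ b ∈ C ∧ FourAdj a b) p q


namespace Brod

/-! ### Corner bookkeeping -/

def InfCorner (c u : ℤ × ℤ) : Prop := u = c ∨ u = (c.1+1, c.2+1)
def SupCorner (c v : ℤ × ℤ) : Prop := v = (c.1, c.2+1) ∨ v = (c.1+1, c.2)
def oInf (c u : ℤ × ℤ) : ℤ × ℤ := if u = c then (c.1+1, c.2+1) else c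
def oSup (c v : ℤ × ℤ) : ℤ × ℤ := if v = (c.1, c.2+1) then (c.1+1, c.2) else (c.1, c.2+1)

lemma pe {a1 b1 a2 b2 : ℤ} (h1 : a1 = a2) (h2 : b1 = b2) : ((a1,b1):ℤ×ℤ) = (a2,b2) := by
  subst h1; subst h2; rfl

lemma infCorner_oInf (c u : ℤ × ℤ) : InfCorner c (oInf c u) := by
  unfold oInf; split <;> simp [InfCorner]

lemma supCorner_oSup (c v : ℤ × ℤ) : SupCorner c (oSup c v) := by
  unfold oSup; split <;> simp [SupCorner]

lemma ne_corner (c : ℤ × ℤ) : ((c.1+1 : ℤ), (c.2+1 : ℤ)) ≠ c := by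
  intro h; rw [Prod.ext_iff] at h; omega

lemma ne_corner' (c : ℤ × ℤ) : ((c.1+1 : ℤ), (c.2 : ℤ)) ≠ (c.1, c.2+1) := by
  intro h; rw [Prod.ext_iff] at h; omega

lemma oInf_self (c : ℤ × ℤ) : oInf c c = (c.1+1, c.2+1) := if_pos rfl
lemma oInf_other (c : ℤ × ℤ) : oInf c (c.1+1, c.2+1) = c := if_neg (ne_corner c)
lemma oSup_self (c : ℤ × ℤ) : oSup c (c.1, c.2+1) = (c.1+1, c.2) := if_pos rfl
lemma oSup_other (c : ℤ × ℤ) : oSup c (c.1+1, c.2) = (c.1, c.2+1) := if_neg (ne_corner' c)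

lemma diag_oInf {c u : ℤ × ℤ} (h : InfCorner c u) : s(u, oInf c u) = infDiag c := by
  rcases h with h | h <;> rw [h]
  · rw [oInf_self]; rfl
  · rw [oInf_other, infDiag, Sym2.eq_swap]

lemma diag_oSup {c v : ℤ × ℤ} (h : SupCorner c v) : s(oSup c v, v) = supDiag c := by
  rcases h with h | h <;> rw [h]
  · rw [oSup_self, supDiag, Sym2.eq_swap]
  · rw [oSup_other]; rfl

lemma oInf_oInf {c v : ℤ × ℤ} (h : InfCorner c v) : oInf c (oInf c v) = v := by
  rcases h with h | h <;> rw [h]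
  · rw [oInf_self, oInf_other]
  · rw [oInf_other, oInf_self]

lemma adj_inf_sup {c u v : ℤ × ℤ} (hu : InfCorner c u) (hv : SupCorner c v) : Adj u v := by
  rcases hu with h | h <;> rcases hv with h' | h' <;> subst h <;> subst h' <;> simp [Adj]

lemma fourAdj_symm {p q : ℤ × ℤ} (h : FourAdj p q) : FourAdj q p := by
  unfold FourAdj at *; nlinarith [h]

lemma infDiag_inj {c c' : ℤ × ℤ} (h : infDiag c = infDiag c') : c = c' := by
  rw [infDiag, infDiag, Sym2.eq_iff] at h
  rcases h with ⟨h1, _⟩ | ⟨h1, h2⟩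
  · exact h1
  · rw [Prod.ext_iff] at h1 h2; simp at h1 h2; rw [Prod.ext_iff]; omega

lemma supDiag_inj {c c' : ℤ × ℤ} (h : supDiag c = supDiag c') : c = c' := by
  rw [supDiag, supDiag, Sym2.eq_iff] at h
  rcases h with ⟨h1, h2⟩ | ⟨h1, h2⟩ <;> rw [Prod.ext_iff] at h1 h2 <;>
    simp at h1 h2 <;> rw [Prod.ext_iff] <;> omega

lemma infDiag_ne_supDiag (c c' : ℤ × ℤ) : infDiag c ≠ supDiag c' := by
  intro h
  rw [infDiag, supDiag, Sym2.eq_iff] at h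
  rcases h with ⟨h1, h2⟩ | ⟨h1, h2⟩ <;> rw [Prod.ext_iff] at h1 h2 <;>
    simp at h1 h2 <;> omega

lemma shared {c0 c1 : ℤ × ℤ} (h : FourAdj c0 c1) :
    ∃ u1 v1, InfCorner c1 u1 ∧ SupCorner c0 u1 ∧ SupCorner c1 v1 ∧ InfCorner c0 v1 := by
  obtain ⟨a, b⟩ := c0
  obtain ⟨x, y⟩ := c1
  simp only [FourAdj] at h
  have hx : x = a + 1 ∧ y = b ∨ x = a - 1 ∧ y = b ∨ x = a ∧ y = b + 1 ∨ x = a ∧ y = b - 1 := by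
    have h3 : a - 1 ≤ x ∧ x ≤ a + 1 := by
      constructor <;> nlinarith [sq_nonneg (b - y), sq_nonneg (a - x - 1), sq_nonneg (a - x + 1)]
    have h4 : b - 1 ≤ y ∧ y ≤ b + 1 := by
      constructor <;> nlinarith [sq_nonneg (a - x), sq_nonneg (b - y - 1), sq_nonneg (b - y + 1)]
    have hx3 : x = a - 1 ∨ x = a ∨ x = a + 1 := by omega
    have hy3 : y = b - 1 ∨ y = b ∨ y = b + 1 := by omega
    rcases hx3 with rfl | rfl | rfl <;> rcases hy3 with rfl | rfl | rfl <;> simp_all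
  rcases hx with ⟨hx, hy⟩ | ⟨hx, hy⟩ | ⟨hx, hy⟩ | ⟨hx, hy⟩
  · exact ⟨(a+1, b), (a+1, b+1), Or.inl (pe (by omega) (by omega)),
      Or.inr (pe (by omega) (by omega)),
      Or.inl (pe (by omega) (by omega)), Or.inr (pe (by omega) (by omega))⟩
  · exact ⟨(a, b+1), (a, b), Or.inr (pe (by omega) (by omega)),
      Or.inl (pe (by omega) (by omega)),
      Or.inr (pe (by omega) (by omega)), Or.inl (pe (by omega) (by omega))⟩
  · exact ⟨(a, b+1), (a+1, b+1), Or.inl (pe (by omega) (by omega)),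
      Or.inl (pe (by omega) (by omega)),
      Or.inr (pe (by omega) (by omega)), Or.inr (pe (by omega) (by omega))⟩
  · exact ⟨(a+1, b), (a, b), Or.inr (pe (by omega) (by omega)),
      Or.inr (pe (by omega) (by omega)),
      Or.inl (pe (by omega) (by omega)), Or.inl (pe (by omega) (by omega))⟩

/-! ### Connectivity infrastructure -/

def RelIn (S : Finset (ℤ × ℤ)) (a b : ℤ × ℤ) : Prop := a ∈ S ∧ b ∈ S ∧ FourAdj a b

lemma relIn_symm (S : Finset (ℤ × ℤ)) : Symmetric (RelIn S) :=
  fun _ _ h => ⟨h.2.1, h.1, fourAdj_symm h.2.2⟩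

lemma rtg_symm {S : Finset (ℤ × ℤ)} {a b : ℤ × ℤ}
    (h : Relation.ReflTransGen (RelIn S) a b) : Relation.ReflTransGen (RelIn S) b a :=
  haveI : Std.Symm (RelIn S) := ⟨fun _ _ h => relIn_symm S h⟩
  Std.Symm.symm (r := Relation.ReflTransGen (RelIn S)) _ _ h

lemma reach_mem {S : Finset (ℤ × ℤ)} {p x : ℤ × ℤ} (hp : p ∈ S)
    (h : Relation.ReflTransGen (RelIn S) p x) : x ∈ S := by
  induction h with
  | refl => exact hp
  | tail _ step _ => exact step.2.1

open Classical in
noncomputable def comp (S : Finset (ℤ × ℤ)) (p : ℤ × ℤ) : Finset (ℤ × ℤ) :=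
  S.filter (fun q => Relation.ReflTransGen (RelIn S) p q)

lemma mem_comp {S : Finset (ℤ × ℤ)} {p q : ℤ × ℤ} :
    q ∈ comp S p ↔ q ∈ S ∧ Relation.ReflTransGen (RelIn S) p q := by
  simp [comp]

lemma comp_lift {S : Finset (ℤ × ℤ)} {p : ℤ × ℤ} (hp : p ∈ S) {x : ℤ × ℤ}
    (h : Relation.ReflTransGen (RelIn S) p x) :
    Relation.ReflTransGen (RelIn (comp S p)) p x := by
  induction h with
  | refl => exact Relation.ReflTransGen.refl
  | tail hpb step ih =>
    exact ih.tail ⟨mem_comp.mpr ⟨reach_mem hp hpb, hpb⟩,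
      mem_comp.mpr ⟨step.2.1, hpb.tail step⟩, step.2.2⟩

lemma comp_conn {S : Finset (ℤ × ℤ)} {p : ℤ × ℤ} (hp : p ∈ S) :
    (comp S p).Nonempty ∧ ∀ a ∈ comp S p, ∀ b ∈ comp S p,
      Relation.ReflTransGen (RelIn (comp S p)) a b := by
  refine ⟨⟨p, mem_comp.mpr ⟨hp, Relation.ReflTransGen.refl⟩⟩, ?_⟩
  intro a ha b hb
  have h1 := comp_lift hp (mem_comp.mp ha).2
  have h2 := comp_lift hp (mem_comp.mp hb).2
  exact Relation.ReflTransGen.trans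
    (rtg_symm h1) h2

lemma comp_out {S : Finset (ℤ × ℤ)} {p q x : ℤ × ℤ} (hq : q ∉ comp S p)
    (h : Relation.ReflTransGen (RelIn S) q x) :
    x ∉ comp S p ∧ Relation.ReflTransGen
      (fun a b => (a ∈ S ∧ a ∉ comp S p) ∧ (b ∈ S ∧ b ∉ comp S p) ∧ FourAdj a b) q x := by
  induction h with
  | refl => exact ⟨hq, Relation.ReflTransGen.refl⟩
  | tail hqb step ih =>
    rename_i b x'
    obtain ⟨hbK, path⟩ := ih
    have hxK : x' ∉ comp S p := by
      intro hx
      exact hbK (mem_comp.mpr ⟨step.1,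
        (mem_comp.mp hx).2.tail (relIn_symm S step)⟩)
    exact ⟨hxK, path.tail ⟨⟨step.1, hbK⟩, ⟨step.2.1, hxK⟩, step.2.2⟩⟩

lemma attach {C : Finset (ℤ × ℤ)} {c0 : ℤ × ℤ}
    (hconn : ∀ a ∈ C, ∀ b ∈ C, Relation.ReflTransGen (RelIn C) a b) (hc0 : c0 ∈ C)
    {q : ℤ × ℤ} (hq : q ∈ C) (hne : q ≠ c0) :
    ∃ c1, Relation.ReflTransGen (RelIn (C.erase c0)) q c1 ∧
      c1 ∈ C.erase c0 ∧ FourAdj c1 c0 := by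
  have h := hconn q hq c0 hc0
  clear hq
  revert hne
  induction h using Relation.ReflTransGen.head_induction_on with
  | refl => exact fun hne => absurd rfl hne
  | head step h' ih =>
    rename_i a c
    intro hne
    by_cases hc : c = c0
    · exact ⟨a, Relation.ReflTransGen.refl,
        Finset.mem_erase.mpr ⟨hne, step.1⟩, hc ▸ step.2.2⟩
    · obtain ⟨c1, path, hmem, hadj⟩ := ih hc
      exact ⟨c1, path.head ⟨Finset.mem_erase.mpr ⟨hne, step.1⟩,
        Finset.mem_erase.mpr ⟨hc, step.2.1⟩, step.2.2⟩, hmem, hadj⟩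

/-! ### List helpers -/

lemma sub2 {α : Type*} {a b : α} : ∀ {M : List α}, List.Sublist [a, b] M →
    ∃ p q, p < q ∧ ∃ (hq : q < M.length), M[q] = b ∧ ∃ (hp : p < M.length), M[p] = a := by
  intro M
  induction M with
  | nil => intro h; simp at h
  | cons x M' ih =>
    intro h
    cases h with
    | cons _ h' =>
      obtain ⟨p, q, hpq, hq, hb, hp, ha⟩ := ih h'
      exact ⟨p+1, q+1, by omega, by simpa using hq, by simpa using hb,
        by simpa using hp, by simpa using ha⟩
    | cons_cons _ h' =>
      have hb : b ∈ M' := h'.subset (by simp)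
      obtain ⟨q, hq, hbq⟩ := List.mem_iff_getElem.mp hb
      exact ⟨0, q+1, by omega, by simpa using hq, by simpa using hbq, by simp, by simp⟩

lemma sublist_cons_ne {α : Type*} {a b x : α} {l : List α}
    (h : List.Sublist [a, b] (x :: l)) (hne : a ≠ x) : List.Sublist [a, b] l := by
  cases h with
  | cons _ h' => exact h'
  | cons_cons _ h' => exact absurd rfl hne

lemma getLast?_cons_ne {α : Type*} (a : α) {l : List α} (h : l ≠ []) :
    (a :: l).getLast? = l.getLast? := by
  cases l with
  | nil => exact absurd rfl h
  | cons b t => simp [List.getLast?_cons_cons]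

/-! ### The main construction -/

def GoodRel (e f : (ℤ × ℤ) × (ℤ × ℤ)) : Prop := Adj e.2 f.1

def Pre (C : Finset (ℤ × ℤ)) (c0 u v : ℤ × ℤ) (L : List ((ℤ × ℤ) × (ℤ × ℤ))) : Prop :=
  L.length = 2 * C.card ∧
  (∀ e ∈ L, ∃ c ∈ C, diagOf e = infDiag c ∨ diagOf e = supDiag c) ∧
  (∀ c ∈ C, List.Sublist [infDiag c, supDiag c] (L.map diagOf)) ∧
  (L.map diagOf).Nodup ∧
  List.Chain' GoodRel L ∧
  L.head? = some (u, oInf c0 u) ∧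
  L.getLast? = some (oSup c0 v, v)

lemma clash {c c' : ℤ × ℤ} {x : Sym2 (ℤ × ℤ)}
    (h : x = infDiag c ∨ x = supDiag c) (h' : x = infDiag c' ∨ x = supDiag c') : c = c' := by
  rcases h with rfl | rfl
  · rcases h' with h' | h'
    · exact infDiag_inj h'
    · exact absurd h' (infDiag_ne_supDiag c c')
  · rcases h' with h' | h'
    · exact absurd h'.symm (infDiag_ne_supDiag c' c)
    · exact supDiag_inj h'

lemma key : ∀ (n : ℕ) (C : Finset (ℤ × ℤ)), C.card ≤ n → FourConnected C →
    ∀ c0 ∈ C, ∀ u v, InfCorner c0 u → SupCorner c0 v → ∃ L, Pre C c0 u v L := by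
  intro n
  induction n with
  | zero =>
    intro C hcard hconn c0 hc0 u v hu hv
    exact absurd (Finset.card_pos.mpr ⟨c0, hc0⟩) (by omega)
  | succ n ih =>
    intro C hcard hC c0 hc0 u v hu hv
    by_cases hsing : C.erase c0 = ∅
    · -- C = {c0}
      have hC1 : C = {c0} := by
        apply Finset.eq_singleton_iff_unique_mem.mpr
        refine ⟨hc0, fun x hx => ?_⟩
        by_contra hne
        exact (Finset.notMem_empty x) (hsing ▸ Finset.mem_erase.mpr ⟨hne, hx⟩)
      have e1 : diagOf (u, oInf c0 u) = infDiag c0 := diag_oInf hu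
      have e2 : diagOf (oSup c0 v, v) = supDiag c0 := diag_oSup hv
      refine ⟨[(u, oInf c0 u), (oSup c0 v, v)], ?_, ?_, ?_, ?_, ?_, rfl, rfl⟩
      · simp [hC1]
      · intro e he
        rcases List.mem_cons.mp he with rfl | he'
        · exact ⟨c0, hc0, Or.inl e1⟩
        · rcases List.mem_cons.mp he' with rfl | he''
          · exact ⟨c0, hc0, Or.inr e2⟩
          · simp at he''
      · intro c hc
        rw [hC1] at hc
        rw [Finset.mem_singleton] at hc
        rw [hc]
        have : [(u, oInf c0 u), (oSup c0 v, v)].map diagOf = [infDiag c0, supDiag c0] := by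
          simp [e1, e2]
        rw [this]
      · have : [(u, oInf c0 u), (oSup c0 v, v)].map diagOf = [infDiag c0, supDiag c0] := by
          simp [e1, e2]
        rw [this]
        simp [infDiag_ne_supDiag c0 c0]
      · refine List.isChain_cons_cons.mpr ⟨?_, List.isChain_singleton _⟩
        exact adj_inf_sup (infCorner_oInf c0 u) (supCorner_oSup c0 v)
    · -- inductive step
      obtain ⟨p, hp⟩ := Finset.nonempty_of_ne_empty hsing
      set S := C.erase c0 with hS
      set K := comp S p with hKdef
      have hpne : p ≠ c0 := (Finset.mem_erase.mp hp).1
      have hpC : p ∈ C := (Finset.mem_erase.mp hp).2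
      have hpK : p ∈ K := mem_comp.mpr ⟨hp, Relation.ReflTransGen.refl⟩
      have hKS : K ⊆ S := fun x hx => (mem_comp.mp hx).1
      have hKC : K ⊆ C := fun x hx => Finset.mem_of_mem_erase (hKS hx)
      have hc0K : c0 ∉ K := fun h => (Finset.mem_erase.mp (hKS h)).1 rfl
      have hconn : ∀ a ∈ C, ∀ b ∈ C, Relation.ReflTransGen (RelIn C) a b := hC.2
      -- attachment cell
      obtain ⟨c1, hpath1, hc1S, hadj1⟩ := attach hconn hc0 hpC hpne
      have hc1K : c1 ∈ K := mem_comp.mpr ⟨hc1S, hpath1⟩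
      obtain ⟨u1, v1, hu1, hsu1, hv1, hiv1⟩ := shared (fourAdj_symm hadj1)
      -- the rest
      set R := C \ K with hRdef
      have hRC : R ⊆ C := Finset.sdiff_subset
      have hc0R : c0 ∈ R := Finset.mem_sdiff.mpr ⟨hc0, hc0K⟩
      have disjKR : ∀ c, c ∈ K → c ∈ R → False :=
        fun c hK hR => (Finset.mem_sdiff.mp hR).2 hK
      -- R is connected
      have toC0 : ∀ q ∈ R, Relation.ReflTransGen (RelIn R) q c0 := by
        intro q hq
        by_cases hqc : q = c0
        · subst hqc; exact Relation.ReflTransGen.refl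
        · have hqC : q ∈ C := (Finset.mem_sdiff.mp hq).1
          have hqK : q ∉ K := (Finset.mem_sdiff.mp hq).2
          obtain ⟨c1', path', hc1'S, hadj'⟩ := attach hconn hc0 hqC hqc
          obtain ⟨hc1'K, path''⟩ := comp_out hqK path'
          have path3 : Relation.ReflTransGen (RelIn R) q c1' := by
            refine Relation.ReflTransGen.mono ?_ _ _ path''
            rintro a b ⟨⟨haS, haK⟩, ⟨hbS, hbK⟩, hab⟩
            exact ⟨Finset.mem_sdiff.mpr ⟨Finset.mem_of_mem_erase haS, haK⟩,
              Finset.mem_sdiff.mpr ⟨Finset.mem_of_mem_erase hbS, hbK⟩, hab⟩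
          exact path3.tail ⟨Finset.mem_sdiff.mpr
            ⟨Finset.mem_of_mem_erase hc1'S, hc1'K⟩, hc0R, hadj'⟩
      have hRconn : FourConnected R := by
        refine ⟨⟨c0, hc0R⟩, ?_⟩
        intro a ha b hb
        exact (toC0 a ha).trans (rtg_symm (toC0 b hb))
      have hKconn : FourConnected K := by
        have h := comp_conn hp
        exact ⟨h.1, h.2⟩
      -- cards
      have hKcard : K.card ≤ n := by
        have h1 : K.card < C.card := Finset.card_lt_card ⟨hKC, fun h => hc0K (h hc0)⟩
        omega
      have hRcard : R.card ≤ n := by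
        have hpR : p ∉ R := fun h => disjKR p hpK h
        have h1 : R.card < C.card := Finset.card_lt_card ⟨hRC, fun h => hpR (h hpC)⟩
        omega
      have hsum : K.card + R.card = C.card := by
        have h1 : R.card = C.card - K.card := by rw [hRdef]; exact Finset.card_sdiff_of_subset hKC
        have h2 : K.card ≤ C.card := Finset.card_le_card hKC
        omega
      -- recursive calls
      obtain ⟨LK, lenK, covK, subK, ndK, chK, hdK, lsK⟩ :=
        ih K hKcard hKconn c1 hc1K u1 v1 hu1 hv1
      obtain ⟨LR, lenR, covR, subR, ndR, chR, hdR, lsR⟩ :=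
        ih R hRcard hRconn c0 hc0R (oInf c0 v1) v (infCorner_oInf c0 v1) hv
      rw [oInf_oInf hiv1] at hdR
      -- split LR
      cases LR with
      | nil => simp at hdR
      | cons y0 tl =>
      have hy0 : y0 = (oInf c0 v1, v1) := by simpa using hdR
      subst hy0
      have hRpos : 1 ≤ R.card := Finset.card_pos.mpr ⟨c0, hc0R⟩
      have hKpos : 1 ≤ K.card := Finset.card_pos.mpr ⟨p, hpK⟩
      have htl_len : tl.length + 1 = 2 * R.card := by simpa using lenR
      have htl_ne : tl ≠ [] := by
        intro h
        rw [h] at htl_len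
        simp only [List.length_nil] at htl_len
        omega
      have hLK_ne : LK ≠ [] := by
        intro h
        rw [h] at lenK
        simp only [List.length_nil] at lenK
        omega
      have hdy : diagOf (oInf c0 v1, v1) = infDiag c0 := by
        show s(oInf c0 v1, v1) = infDiag c0
        rw [Sym2.eq_swap]
        exact diag_oInf hiv1
      have hdx : diagOf (u, oInf c0 u) = infDiag c0 := diag_oInf hu
      have hmapR : ((oInf c0 v1, v1) :: tl).map diagOf = infDiag c0 :: tl.map diagOf := by
        simp [hdy]
      have kindK : ∀ x ∈ LK.map diagOf, ∃ c ∈ K, x = infDiag c ∨ x = supDiag c := by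
        intro x hx
        rw [List.mem_map] at hx
        obtain ⟨e, he, rfl⟩ := hx
        exact covK e he
      have kindTl : ∀ x ∈ tl.map diagOf, ∃ c ∈ R, x = infDiag c ∨ x = supDiag c := by
        intro x hx
        rw [List.mem_map] at hx
        obtain ⟨e, he, rfl⟩ := hx
        exact covR e (List.mem_cons_of_mem _ he)
      have ndR' := hmapR ▸ ndR
      obtain ⟨hnotin_tl, ndtl⟩ := List.nodup_cons.mp ndR'
      refine ⟨(u, oInf c0 u) :: (LK ++ tl), ?_, ?_, ?_, ?_, ?_, rfl, ?_⟩
      · -- length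
        simp only [List.length_cons, List.length_append]
        rw [lenK]
        omega
      · -- coverage
        intro e he
        rcases List.mem_cons.mp he with rfl | he'
        · exact ⟨c0, hc0, Or.inl hdx⟩
        · rcases List.mem_append.mp he' with h | h
          · obtain ⟨c, hc, hor⟩ := covK e h
            exact ⟨c, hKC hc, hor⟩
          · obtain ⟨c, hc, hor⟩ := covR e (List.mem_cons_of_mem _ h)
            exact ⟨c, hRC hc, hor⟩
      · -- sublists
        intro c hc
        have hmap : ((u, oInf c0 u) :: (LK ++ tl)).map diagOf
            = infDiag c0 :: (LK.map diagOf ++ tl.map diagOf) := by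
          simp [hdx]
        rw [hmap]
        by_cases hcK : c ∈ K
        · exact ((subK c hcK).trans (List.sublist_append_left _ _)).trans
            (List.sublist_cons_self _ _)
        · have hcR : c ∈ R := Finset.mem_sdiff.mpr ⟨hc, hcK⟩
          have hsub := subR c hcR
          rw [hmapR] at hsub
          by_cases hcc0 : c = c0
          · subst hcc0
            have hsup : supDiag c ∈ tl.map diagOf := by
              have hmem : supDiag c ∈ infDiag c :: tl.map diagOf := hsub.subset (by simp)
              rcases List.mem_cons.mp hmem with h | h
              · exact absurd h.symm (infDiag_ne_supDiag c c)
              · exact h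
            exact (List.singleton_sublist.mpr (List.mem_append_right _ hsup)).cons₂ _
          · have hne : infDiag c ≠ infDiag c0 := fun h => hcc0 (infDiag_inj h)
            have hsub' := sublist_cons_ne hsub hne
            exact ((hsub'.trans (List.sublist_append_right _ _))).trans
              (List.sublist_cons_self _ _)
      · -- nodup
        have hmap : ((u, oInf c0 u) :: (LK ++ tl)).map diagOf
            = infDiag c0 :: (LK.map diagOf ++ tl.map diagOf) := by
          simp [hdx]
        rw [hmap, List.nodup_cons, List.nodup_append]
        refine ⟨?_, ndK, ndtl, ?_⟩
        · intro h
          rcases List.mem_append.mp h with h' | h'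
          · obtain ⟨c, hcK, hor⟩ := kindK _ h'
            rcases hor with h'' | h''
            · exact hc0K (infDiag_inj h'' ▸ hcK)
            · exact infDiag_ne_supDiag c0 c h''
          · exact hnotin_tl h'
        · intro x hx1 _y hx2 hxy
          subst hxy
          obtain ⟨c, hcK, hor⟩ := kindK x hx1
          obtain ⟨c', hc'R, hor'⟩ := kindTl x hx2
          exact disjKR c hcK (clash hor hor' ▸ hc'R)
      · -- chain
        refine List.isChain_cons.mpr ⟨?_, ?_⟩
        · intro y hy
          rw [List.head?_append, hdK] at hy
          simp at hy
          subst hy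
          exact adj_inf_sup (infCorner_oInf c0 u) hsu1
        · rw [List.isChain_append]
          refine ⟨chK, chR.tail, ?_⟩
          intro a ha b hb
          rw [lsK] at ha
          simp at ha
          subst ha
          exact (List.isChain_cons.mp chR).1 b hb
      · -- getLast?
        have hlsR : tl.getLast? = some (oSup c0 v, v) := by
          rwa [getLast?_cons_ne _ htl_ne] at lsR
        show (((u, oInf c0 u) :: LK) ++ tl).getLast? = some (oSup c0 v, v)
        rw [List.getLast?_append, hlsR]
        rfl

end Brod

/-- Every 4-connected configuration is brodable. -/
theorem fourConnected_brodable (C : Finset (ℤ × ℤ)) (hC : FourConnected C) :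
    Brodable C := by
  classical
  obtain ⟨c0, hc0⟩ := hC.1
  obtain ⟨L, hlen, cov, subl, nd, ch, -, -⟩ :=
    Brod.key C.card C le_rfl hC c0 hc0 c0 (c0.1, c0.2+1) (Or.inl rfl) (Or.inl rfl)
  have hgetD : ∀ (i : ℕ) (h : i < L.length), L.getD i ((0,0),(0,0)) = L[i] :=
    fun i h => List.getD_eq_getElem L _ h
  have hmlen : (L.map diagOf).length = L.length := List.length_map _
  refine ⟨fun i => L.getD i ((0,0),(0,0)), ?_, ?_, ?_, ?_, ?_⟩
  · intro i hi
    have hiL : i < L.length := by omega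
    simp only [hgetD i hiL]
    exact cov _ (List.getElem_mem hiL)
  · intro c hc
    have hmem : infDiag c ∈ L.map diagOf := (subl c hc).subset (by simp)
    obtain ⟨i, hi, hig⟩ := List.mem_iff_getElem.mp hmem
    have hiL : i < L.length := by omega
    refine ⟨i, ⟨by omega, ?_⟩, ?_⟩
    · simp only [hgetD i hiL]
      rw [List.getElem_map] at hig
      exact hig
    · rintro j ⟨hj, hjv⟩
      have hjL : j < L.length := by omega
      simp only [hgetD j hjL] at hjv
      have h1 : (L.map diagOf)[j]'(by omega) = infDiag c := by
        rw [List.getElem_map]; exact hjv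
      exact nd.getElem_inj_iff.mp (h1.trans hig.symm)
  · intro c hc
    have hmem : supDiag c ∈ L.map diagOf := (subl c hc).subset (by simp)
    obtain ⟨i, hi, hig⟩ := List.mem_iff_getElem.mp hmem
    have hiL : i < L.length := by omega
    refine ⟨i, ⟨by omega, ?_⟩, ?_⟩
    · simp only [hgetD i hiL]
      rw [List.getElem_map] at hig
      exact hig
    · rintro j ⟨hj, hjv⟩
      have hjL : j < L.length := by omega
      simp only [hgetD j hjL] at hjv
      have h1 : (L.map diagOf)[j]'(by omega) = supDiag c := by
        rw [List.getElem_map]; exact hjv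
      exact nd.getElem_inj_iff.mp (h1.trans hig.symm)
  · intro c hc i j hi2 hj2 hiv hjv
    obtain ⟨pp, qq, hpq, hqlt, hbq, hplt, hap⟩ := Brod.sub2 (subl c hc)
    have hiL : i < L.length := by omega
    have hjL : j < L.length := by omega
    simp only [hgetD i hiL] at hiv
    simp only [hgetD j hjL] at hjv
    have h1 : (L.map diagOf)[i]'(by omega) = infDiag c := by
      rw [List.getElem_map]; exact hiv
    have h2 : (L.map diagOf)[j]'(by omega) = supDiag c := by
      rw [List.getElem_map]; exact hjv
    have hip : i = pp := nd.getElem_inj_iff.mp (h1.trans hap.symm)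
    have hjq : j = qq := nd.getElem_inj_iff.mp (h2.trans hbq.symm)
    omega
  · intro i hi
    have h2 : i + 1 < L.length := by omega
    have h3 := List.isChain_iff_getElem.mp ch i (by omega)
    simp only [hgetD i (by omega), hgetD (i+1) h2]
    exact h3
end

section
/- For every n ≥ 1 and every k with 1 ≤ k ≤ n, the line of n cells admits a closed embroidery whose first diagonal is the inferior diagonal of the cell (k−1,0), traversed from its bottom-left vertex (k−1,0) to (k,1). -/
/-- The line of `n` cells: `{(i, 0) : 0 ≤ i < n}`. -/
def lineConfig (n : ℕ) : Finset (ℤ × ℤ) :=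
  (Finset.range n).image (fun i : ℕ => ((i : ℤ), 0))

def dSeq (n k : ℕ) (i : ℕ) : (ℤ × ℤ) × (ℤ × ℤ) :=
  if (i : ℤ) ≤ (n : ℤ) - k then (((k : ℤ) - 1 + i, 0), ((k : ℤ) + i, 1))
  else if (i : ℤ) ≤ 2 * n - 2 * k then ((2 * (n : ℤ) - k - i + 1, 0), (2 * (n : ℤ) - k - i, 1))
  else if (i : ℤ) ≤ 2 * n - k - 1 then ((2 * (n : ℤ) - k - i, 1), (2 * (n : ℤ) - k - 1 - i, 0))
  else if (i : ℤ) ≤ 2 * n - 2 then (((i : ℤ) - (2 * n - k), 1), ((i : ℤ) - (2 * n - k) + 1, 0))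
  else (((k : ℤ) - 1, 1), ((k : ℤ), 0))

lemma card_lineConfig (n : ℕ) : (lineConfig n).card = n := by
  rw [lineConfig, Finset.card_image_of_injective _ (fun a b h => by simpa using h)]
  exact Finset.card_range n

lemma mem_lineConfig {n : ℕ} {c : ℤ × ℤ} :
    c ∈ lineConfig n ↔ 0 ≤ c.1 ∧ c.1 < n ∧ c.2 = 0 := by
  obtain ⟨a, b⟩ := c
  simp only [lineConfig, Finset.mem_image, Finset.mem_range, Prod.mk.injEq]
  constructor
  · rintro ⟨j, hj, rfl, rfl⟩; refine ⟨by positivity, by exact_mod_cast hj, rfl⟩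
  · rintro ⟨h0, h1, rfl⟩
    exact ⟨a.toNat, by omega, by omega, rfl⟩

lemma adj_of {u v : ℤ × ℤ}
    (h : (u.1 - v.1 = 0 ∧ (u.2 - v.2 = 1 ∨ u.2 - v.2 = -1)) ∨
         (u.2 - v.2 = 0 ∧ (u.1 - v.1 = 1 ∨ u.1 - v.1 = -1))) : Adj u v := by
  unfold Adj
  rcases h with ⟨h1, h2 | h2⟩ | ⟨h1, h2 | h2⟩ <;> rw [h1, h2] <;> ring

lemma inf_iff (n k : ℕ) (hk1 : 1 ≤ k) (hkn : k ≤ n) (a : ℤ) (h0 : 0 ≤ a) (h1 : a < (n : ℤ))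
    (i : ℕ) :
    diagOf (dSeq n k i) = infDiag (a, 0) ↔
      ((k : ℤ) ≤ a + 1 ∧ (i : ℤ) = a + 1 - k) ∨ (a + 2 ≤ (k : ℤ) ∧ (i : ℤ) = 2 * n - k - 1 - a) := by
  simp only [dSeq]
  split_ifs with hA hB hC hD <;>
    simp only [diagOf, infDiag, Sym2.eq_iff, Prod.mk.injEq] <;> norm_num <;> omega

lemma sup_iff (n k : ℕ) (hk1 : 1 ≤ k) (hkn : k ≤ n) (a : ℤ) (h0 : 0 ≤ a) (h1 : a < (n : ℤ))
    (i : ℕ) (hi : i < 2 * n) :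
    diagOf (dSeq n k i) = supDiag (a, 0) ↔
      ((k : ℤ) ≤ a ∧ (i : ℤ) = 2 * n - k - a) ∨ (a + 2 ≤ (k : ℤ) ∧ (i : ℤ) = 2 * n - k + a) ∨
        (a = (k : ℤ) - 1 ∧ (i : ℤ) = 2 * n - 1) := by
  simp only [dSeq]
  split_ifs with hA hB hC hD <;>
    simp only [diagOf, supDiag, Sym2.eq_iff, Prod.mk.injEq] <;> norm_num <;> omega


/-- For every `n ≥ 1` and every `1 ≤ k ≤ n`, the line of `n` cells admits a closed
embroidery starting with the inferior diagonal of the cell `(k-1, 0)`, traversed from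
`(k-1, 0)` to `(k, 1)`. -/
theorem line_closedEmbroidery (n k : ℕ) (hn : 1 ≤ n) (hk1 : 1 ≤ k) (hkn : k ≤ n) :
    ∃ d, IsClosedEmbroidery (lineConfig n) d ∧
      d 0 = (((k : ℤ) - 1, 0), ((k : ℤ), 1)) := by
  refine ⟨dSeq n k, ⟨⟨?_, ?_, ?_, ?_, ?_⟩, ?_⟩, ?_⟩
  · -- every diagonal belongs to some cell
    intro i hi
    rw [card_lineConfig] at hi
    simp only [dSeq]
    split_ifs with hA hB hC hD
    · exact ⟨((k : ℤ) - 1 + i, 0), mem_lineConfig.mpr ⟨by omega, by omega, rfl⟩,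
        Or.inl (by simp only [diagOf, infDiag, Sym2.eq_iff, Prod.mk.injEq] <;> norm_num <;> omega)⟩
    · exact ⟨(2 * (n : ℤ) - k - i, 0), mem_lineConfig.mpr ⟨by omega, by omega, rfl⟩,
        Or.inr (by simp only [diagOf, supDiag, Sym2.eq_iff, Prod.mk.injEq] <;> norm_num <;> omega)⟩
    · exact ⟨(2 * (n : ℤ) - k - 1 - i, 0), mem_lineConfig.mpr ⟨by omega, by omega, rfl⟩,
        Or.inl (by simp only [diagOf, infDiag, Sym2.eq_iff, Prod.mk.injEq] <;> norm_num <;> omega)⟩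
    · exact ⟨((i : ℤ) - (2 * n - k), 0), mem_lineConfig.mpr ⟨by omega, by omega, rfl⟩,
        Or.inr (by simp only [diagOf, supDiag, Sym2.eq_iff, Prod.mk.injEq] <;> norm_num <;> omega)⟩
    · exact ⟨((k : ℤ) - 1, 0), mem_lineConfig.mpr ⟨by omega, by omega, rfl⟩,
        Or.inr (by simp only [diagOf, supDiag, Sym2.eq_iff, Prod.mk.injEq] <;> norm_num <;> omega)⟩
  · -- unique inferior diagonal
    intro c hc
    rw [mem_lineConfig] at hc
    obtain ⟨a, b⟩ := c
    obtain ⟨h0, h1, rfl⟩ := hc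
    rw [card_lineConfig]
    rcases le_or_gt (k : ℤ) (a + 1) with hcase | hcase
    · refine ⟨(a + 1 - k).toNat, ⟨by omega, ?_⟩, ?_⟩
      · rw [inf_iff n k hk1 hkn a h0 h1]; exact Or.inl ⟨hcase, by omega⟩
      · rintro j ⟨hj1, hj2⟩
        rw [inf_iff n k hk1 hkn a h0 h1] at hj2
        omega
    · refine ⟨(2 * n - k - 1 - a).toNat, ⟨by omega, ?_⟩, ?_⟩
      · rw [inf_iff n k hk1 hkn a h0 h1]; exact Or.inr ⟨by omega, by omega⟩
      · rintro j ⟨hj1, hj2⟩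
        rw [inf_iff n k hk1 hkn a h0 h1] at hj2
        omega
  · -- unique superior diagonal
    intro c hc
    rw [mem_lineConfig] at hc
    obtain ⟨a, b⟩ := c
    obtain ⟨h0, h1, rfl⟩ := hc
    rw [card_lineConfig]
    rcases le_or_gt (k : ℤ) a with hcase | hcase
    · refine ⟨(2 * n - k - a).toNat, ⟨by omega, ?_⟩, ?_⟩
      · rw [sup_iff n k hk1 hkn a h0 h1 _ (by omega)]; exact Or.inl ⟨hcase, by omega⟩
      · rintro j ⟨hj1, hj2⟩
        rw [sup_iff n k hk1 hkn a h0 h1 _ hj1] at hj2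
        omega
    · rcases le_or_gt (a + 2) (k : ℤ) with hc2 | hc2
      · refine ⟨(2 * n - k + a).toNat, ⟨by omega, ?_⟩, ?_⟩
        · rw [sup_iff n k hk1 hkn a h0 h1 _ (by omega)]; exact Or.inr (Or.inl ⟨hc2, by omega⟩)
        · rintro j ⟨hj1, hj2⟩
          rw [sup_iff n k hk1 hkn a h0 h1 _ hj1] at hj2
          omega
      · refine ⟨2 * n - 1, ⟨by omega, ?_⟩, ?_⟩
        · rw [sup_iff n k hk1 hkn a h0 h1 _ (by omega)]
          exact Or.inr (Or.inr ⟨by omega, by omega⟩)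
        · rintro j ⟨hj1, hj2⟩
          rw [sup_iff n k hk1 hkn a h0 h1 _ hj1] at hj2
          omega
  · -- inferior before superior
    intro c hc i j hi hj hinf hsup
    rw [card_lineConfig] at hi hj
    rw [mem_lineConfig] at hc
    obtain ⟨a, b⟩ := c
    obtain ⟨h0, h1, rfl⟩ := hc
    rw [inf_iff n k hk1 hkn a h0 h1] at hinf
    rw [sup_iff n k hk1 hkn a h0 h1 _ hj] at hsup
    omega
  · -- adjacency
    intro i hi
    rw [card_lineConfig] at hi
    apply adj_of
    simp only [dSeq]
    split_ifs <;> dsimp only <;> omega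
  · -- closed
    rw [card_lineConfig]
    apply adj_of
    simp only [dSeq]
    split_ifs <;> dsimp only <;> omega
  · -- starting diagonal
    simp only [dSeq]
    rw [if_pos (by push_cast; omega : ((0 : ℕ) : ℤ) ≤ (n : ℤ) - k)]
    norm_num
end

section
/- Gluing lemma: let C₁ and C₂ be disjoint configurations, let e₁ be a closed embroidery of C₁ and e₂ a closed embroidery of C₂. If the start vertex of the first diagonal of e₂ coincides with the start vertex of some diagonal of e₁, then the configuration C₁ ∪ C₂ is strongly brodable. -/
lemma infDiag_inj {c c' : ℤ × ℤ} (h : infDiag c = infDiag c') : c = c' := by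
  simp only [infDiag, Sym2.eq_iff, Prod.ext_iff, Prod.mk.injEq] at h
  exact Prod.ext (by omega) (by omega)

lemma inf_ne_sup {c c' : ℤ × ℤ} : infDiag c ≠ supDiag c' := by
  intro h
  simp only [infDiag, supDiag, Sym2.eq_iff, Prod.ext_iff, Prod.mk.injEq] at h
  omega

lemma supDiag_inj {c c' : ℤ × ℤ} (h : supDiag c = supDiag c') : c = c' := by
  simp only [supDiag, Sym2.eq_iff, Prod.ext_iff, Prod.mk.injEq] at h
  exact Prod.ext (by omega) (by omega)

lemma mem_of_inf {C : Finset (ℤ × ℤ)} {e : ℕ → (ℤ × ℤ) × (ℤ × ℤ)}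
    (h : IsEmbroidery C e) {j : ℕ} {c : ℤ × ℤ} (hj : j < 2 * C.card)
    (hc : diagOf (e j) = infDiag c) : c ∈ C := by
  obtain ⟨c', hc', hor⟩ := h.1 j hj
  rcases hor with h' | h'
  · rw [infDiag_inj (hc.symm.trans h')] ; exact hc'
  · exact absurd (hc.symm.trans h') inf_ne_sup

lemma mem_of_sup {C : Finset (ℤ × ℤ)} {e : ℕ → (ℤ × ℤ) × (ℤ × ℤ)}
    (h : IsEmbroidery C e) {j : ℕ} {c : ℤ × ℤ} (hj : j < 2 * C.card)
    (hc : diagOf (e j) = supDiag c) : c ∈ C := by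
  obtain ⟨c', hc', hor⟩ := h.1 j hj
  rcases hor with h' | h'
  · exact absurd (h'.symm.trans hc) inf_ne_sup
  · rw [supDiag_inj (hc.symm.trans h')] ; exact hc'

/-- The glued sequence. -/
def glued (e₁ e₂ : ℕ → (ℤ × ℤ) × (ℤ × ℤ)) (i m : ℕ) : ℕ → (ℤ × ℤ) × (ℤ × ℤ) :=
  fun j => if j < i then e₁ j else if j < i + m then e₂ (j - i) else e₁ (j - m)

lemma glued_lt {e₁ e₂ : ℕ → (ℤ × ℤ) × (ℤ × ℤ)} {i m j : ℕ} (h : j < i) :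
    glued e₁ e₂ i m j = e₁ j := by
  unfold glued; rw [if_pos h]

lemma glued_mid {e₁ e₂ : ℕ → (ℤ × ℤ) × (ℤ × ℤ)} {i m j : ℕ} (h1 : i ≤ j) (h2 : j < i + m) :
    glued e₁ e₂ i m j = e₂ (j - i) := by
  unfold glued; rw [if_neg (by omega), if_pos h2]

lemma glued_ge {e₁ e₂ : ℕ → (ℤ × ℤ) × (ℤ × ℤ)} {i m j : ℕ} (h : i + m ≤ j) :
    glued e₁ e₂ i m j = e₁ (j - m) := by
  unfold glued; rw [if_neg (by omega), if_neg (by omega)]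

/-- Gluing lemma: if two disjoint configurations admit closed embroideries `e₁` and
`e₂`, and the start vertex of the first diagonal of `e₂` coincides with the start
vertex of some diagonal of `e₁`, then the union is strongly brodable. -/
theorem glue_closedEmbroideries (C₁ C₂ : Finset (ℤ × ℤ)) (hdisj : Disjoint C₁ C₂)
    (e₁ e₂ : ℕ → (ℤ × ℤ) × (ℤ × ℤ))
    (h₁ : IsClosedEmbroidery C₁ e₁) (h₂ : IsClosedEmbroidery C₂ e₂)
    (i : ℕ) (hi : i < 2 * C₁.card) (hstart : (e₁ i).1 = (e₂ 0).1) :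
    StronglyBrodable (C₁ ∪ C₂) := by
  obtain ⟨E₁, hcl₁⟩ := h₁
  obtain ⟨E₂, hcl₂⟩ := h₂
  have hcard : (C₁ ∪ C₂).card = C₁.card + C₂.card := Finset.card_union_of_disjoint hdisj
  set n₁ := C₁.card with hn1
  set n₂ := C₂.card with hn2
  set d := glued e₁ e₂ i (2 * n₂) with hdd
  have hN : 2 * (C₁ ∪ C₂).card = 2 * n₁ + 2 * n₂ := by omega
  -- lifting a diagonal of `d` attached to a cell of `C₁` back to `e₁`
  have lift₁ : ∀ c ∈ C₁, ∀ j < 2 * n₁ + 2 * n₂,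
      (diagOf (d j) = infDiag c ∨ diagOf (d j) = supDiag c) →
      ∃ k, k < 2 * n₁ ∧ diagOf (e₁ k) = diagOf (d j) ∧
        ((j < i ∧ k = j) ∨ (i + 2 * n₂ ≤ j ∧ k = j - 2 * n₂)) := by
    intro c hc j hj hor
    by_cases hja : j < i
    · exact ⟨j, by omega, by rw [hdd, glued_lt hja], Or.inl ⟨hja, rfl⟩⟩
    · by_cases hjb : j < i + 2 * n₂
      · exfalso
        rw [hdd, glued_mid (by omega) hjb] at hor
        have : c ∈ C₂ := by
          rcases hor with h' | h'
          · exact mem_of_inf E₂ (by omega) h'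
          · exact mem_of_sup E₂ (by omega) h'
        exact Finset.disjoint_left.mp hdisj hc this
      · exact ⟨j - 2 * n₂, by omega, by rw [hdd, glued_ge (by omega)], Or.inr ⟨by omega, rfl⟩⟩
  -- lifting a diagonal of `d` attached to a cell of `C₂` back to `e₂`
  have lift₂ : ∀ c ∈ C₂, ∀ j < 2 * n₁ + 2 * n₂,
      (diagOf (d j) = infDiag c ∨ diagOf (d j) = supDiag c) →
      i ≤ j ∧ j < i + 2 * n₂ ∧ diagOf (e₂ (j - i)) = diagOf (d j) := by
    intro c hc j hj hor
    by_cases hja : j < i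
    · exfalso
      rw [hdd, glued_lt hja] at hor
      have : c ∈ C₁ := by
        rcases hor with h' | h'
        · exact mem_of_inf E₁ (by omega) h'
        · exact mem_of_sup E₁ (by omega) h'
      exact Finset.disjoint_left.mp hdisj this hc
    · by_cases hjb : j < i + 2 * n₂
      · exact ⟨by omega, hjb, by rw [hdd, glued_mid (by omega) hjb]⟩
      · exfalso
        rw [hdd, glued_ge (by omega)] at hor
        have : c ∈ C₁ := by
          rcases hor with h' | h'
          · exact mem_of_inf E₁ (by omega) h'
          · exact mem_of_sup E₁ (by omega) h'
        exact Finset.disjoint_left.mp hdisj this hc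
  obtain ⟨h₁₁, h₁₂, h₁₃, h₁₄, h₁₅⟩ := E₁
  obtain ⟨h₂₁, h₂₂, h₂₃, h₂₄, h₂₅⟩ := E₂
  refine ⟨d, ⟨?_, ?_, ?_, ?_, ?_⟩, ?_⟩
  · -- every diagonal of d belongs to some cell of the union
    intro j hj
    rw [hN] at hj
    by_cases hja : j < i
    · rw [hdd, glued_lt hja]
      obtain ⟨c, hc, h⟩ := h₁₁ j (by omega)
      exact ⟨c, Finset.mem_union_left _ hc, h⟩
    · by_cases hjb : j < i + 2 * n₂
      · rw [hdd, glued_mid (by omega) hjb]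
        obtain ⟨c, hc, h⟩ := h₂₁ (j - i) (by omega)
        exact ⟨c, Finset.mem_union_right _ hc, h⟩
      · rw [hdd, glued_ge (by omega)]
        obtain ⟨c, hc, h⟩ := h₁₁ (j - 2 * n₂) (by omega)
        exact ⟨c, Finset.mem_union_left _ hc, h⟩
  · -- unique inferior diagonal
    intro c hc
    rw [Finset.mem_union] at hc
    rcases hc with hc | hc
    · obtain ⟨k, ⟨hk, hek⟩, huk⟩ := h₁₂ c hc
      refine ⟨if k < i then k else k + 2 * n₂, ⟨?_, ?_⟩, ?_⟩
      · rw [hN]; split <;> omega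
      · split_ifs with h
        · rw [hdd, glued_lt h]; exact hek
        · rw [hdd, glued_ge (by omega), Nat.add_sub_cancel]; exact hek
      · rintro j ⟨hj, hdj⟩
        rw [hN] at hj
        obtain ⟨k', hk', hek', hor⟩ := lift₁ c hc j hj (Or.inl hdj)
        have hkk : k' = k := huk k' ⟨hk', hek'.trans hdj⟩
        rcases hor with ⟨h1, h2⟩ | ⟨h1, h2⟩
        · rw [if_pos (by omega)]; omega
        · rw [if_neg (by omega)]; omega
    · obtain ⟨k, ⟨hk, hek⟩, huk⟩ := h₂₂ c hc
      refine ⟨i + k, ⟨by omega, ?_⟩, ?_⟩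
      · rw [hdd, glued_mid (by omega) (by omega), Nat.add_sub_cancel_left]; exact hek
      · rintro j ⟨hj, hdj⟩
        rw [hN] at hj
        obtain ⟨h1, h2, h3⟩ := lift₂ c hc j hj (Or.inl hdj)
        have := huk (j - i) ⟨by omega, h3.trans hdj⟩
        omega
  · -- unique superior diagonal
    intro c hc
    rw [Finset.mem_union] at hc
    rcases hc with hc | hc
    · obtain ⟨k, ⟨hk, hek⟩, huk⟩ := h₁₃ c hc
      refine ⟨if k < i then k else k + 2 * n₂, ⟨?_, ?_⟩, ?_⟩
      · rw [hN]; split <;> omega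
      · split_ifs with h
        · rw [hdd, glued_lt h]; exact hek
        · rw [hdd, glued_ge (by omega), Nat.add_sub_cancel]; exact hek
      · rintro j ⟨hj, hdj⟩
        rw [hN] at hj
        obtain ⟨k', hk', hek', hor⟩ := lift₁ c hc j hj (Or.inr hdj)
        have hkk : k' = k := huk k' ⟨hk', hek'.trans hdj⟩
        rcases hor with ⟨h1, h2⟩ | ⟨h1, h2⟩
        · rw [if_pos (by omega)]; omega
        · rw [if_neg (by omega)]; omega
    · obtain ⟨k, ⟨hk, hek⟩, huk⟩ := h₂₃ c hc
      refine ⟨i + k, ⟨by omega, ?_⟩, ?_⟩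
      · rw [hdd, glued_mid (by omega) (by omega), Nat.add_sub_cancel_left]; exact hek
      · rintro j ⟨hj, hdj⟩
        rw [hN] at hj
        obtain ⟨h1, h2, h3⟩ := lift₂ c hc j hj (Or.inr hdj)
        have := huk (j - i) ⟨by omega, h3.trans hdj⟩
        omega
  · -- inferior before superior
    intro c hc j₁ j₂ hj₁ hj₂ hinf hsup
    rw [hN] at hj₁ hj₂
    rw [Finset.mem_union] at hc
    rcases hc with hc | hc
    · obtain ⟨k₁, hk₁, hek₁, hor₁⟩ := lift₁ c hc j₁ hj₁ (Or.inl hinf)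
      obtain ⟨k₂, hk₂, hek₂, hor₂⟩ := lift₁ c hc j₂ hj₂ (Or.inr hsup)
      have := h₁₄ c hc k₁ k₂ hk₁ hk₂ (hek₁.trans hinf) (hek₂.trans hsup)
      omega
    · obtain ⟨ha₁, hb₁, he₁⟩ := lift₂ c hc j₁ hj₁ (Or.inl hinf)
      obtain ⟨ha₂, hb₂, he₂⟩ := lift₂ c hc j₂ hj₂ (Or.inr hsup)
      have := h₂₄ c hc (j₁ - i) (j₂ - i) (by omega) (by omega)
        (he₁.trans hinf) (he₂.trans hsup)
      omega
  · -- adjacency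
    intro j hj
    rw [hN] at hj
    by_cases ha : j + 1 < i
    · rw [hdd, glued_lt (by omega), glued_lt ha]
      exact h₁₅ j (by omega)
    · by_cases hb : j + 1 = i
      · rw [hdd, glued_lt (by omega)]
        by_cases hn : 0 < n₂
        · rw [glued_mid (by omega) (by omega)]
          have h0 : j + 1 - i = 0 := by omega
          rw [h0, ← hstart]
          have : i = j + 1 := hb.symm
          rw [this]
          exact h₁₅ j (by omega)
        · rw [glued_ge (by omega)]
          have : j + 1 - 2 * n₂ = j + 1 := by omega
          rw [this]
          exact h₁₅ j (by omega)
      · by_cases hc : j + 1 < i + 2 * n₂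
        · rw [hdd, glued_mid (by omega) (by omega), glued_mid (by omega) hc]
          have : j + 1 - i = (j - i) + 1 := by omega
          rw [this]
          exact h₂₅ (j - i) (by omega)
        · by_cases he : j + 1 = i + 2 * n₂
          · have hn : 0 < n₂ := by omega
            rw [hdd, glued_mid (by omega) (by omega), glued_ge (by omega)]
            have h1 : j - i = 2 * n₂ - 1 := by omega
            have h2 : j + 1 - 2 * n₂ = i := by omega
            rw [h1, h2, hstart]
            exact hcl₂
          · rw [hdd, glued_ge (by omega), glued_ge (by omega)]
            have : j + 1 - 2 * n₂ = (j - 2 * n₂) + 1 := by omega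
            rw [this]
            exact h₁₅ (j - 2 * n₂) (by omega)
  · -- closedness
    have hlast : 2 * (C₁ ∪ C₂).card - 1 = 2 * n₁ + 2 * n₂ - 1 := by omega
    rw [hlast, hdd, glued_ge (by omega)]
    have h1 : 2 * n₁ + 2 * n₂ - 1 - 2 * n₂ = 2 * n₁ - 1 := by omega
    rw [h1]
    by_cases hz : 0 < i
    · rw [glued_lt hz]
      exact hcl₁
    · have hi0 : i = 0 := by omega
      by_cases hn : 0 < n₂
      · rw [glued_mid (by omega) (by omega)]
        have : 0 - i = 0 := by omega
        rw [this, ← hstart, hi0]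
        exact hcl₁
      · rw [glued_ge (by omega)]
        have : 0 - 2 * n₂ = 0 := by omega
        rw [this]
        exact hcl₁
end

section
/- For every n ≥ 3, the descending staircase E_n is not strongly brodable. -/
/-- The descending staircase `E_n = {(i, -i) : 0 ≤ i < n}`. -/
def staircase (n : ℕ) : Finset (ℤ × ℤ) :=
  (Finset.range n).image (fun i : ℕ => ((i : ℤ), -(i : ℤ)))

lemma sq_one_classify (a b : ℤ) (h : a^2 + b^2 = 1) :
    (a = 0 ∧ (b = 1 ∨ b = -1)) ∨ (b = 0 ∧ (a = 1 ∨ a = -1)) := by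
  have ha1 : a ≤ 1 := by nlinarith [sq_nonneg b]
  have ha2 : -1 ≤ a := by nlinarith [sq_nonneg b]
  have hb1 : b ≤ 1 := by nlinarith [sq_nonneg a]
  have hb2 : -1 ≤ b := by nlinarith [sq_nonneg a]
  interval_cases a <;> interval_cases b <;> simp_all

lemma adj_sum_parity (u v : ℤ × ℤ) (h : Adj u v) : (u.1 + u.2 + v.1 + v.2) % 2 = 1 := by
  rcases sq_one_classify _ _ h with ⟨h1, h2⟩ | ⟨h1, h2⟩ <;> omega

lemma adj_comm' (u v : ℤ × ℤ) (h : Adj u v) : Adj v u := by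
  unfold Adj at *; linear_combination h

lemma adj_pin1 (k m : ℤ) (h : Adj (k, -k) (m, -m + 1)) : m = k ∨ m = k + 1 := by
  unfold Adj at h
  have h' : (k - m)^2 + ((k - m) + 1)^2 = 1 := by linear_combination h
  rcases sq_one_classify _ _ h' with ⟨h1, _⟩ | ⟨h1, _⟩ <;> omega

lemma adj_pin2 (k m : ℤ) (h : Adj (k + 1, -k + 1) (m, -m + 1)) : m = k ∨ m = k + 1 := by
  unfold Adj at h
  have h' : (k + 1 - m)^2 + (m - k)^2 = 1 := by linear_combination h
  rcases sq_one_classify _ _ h' with ⟨h1, _⟩ | ⟨h1, _⟩ <;> omega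

lemma ladder (w : ℕ → ℤ) (m : ℤ) : ∀ s' s, s ≤ s' → w s ≤ m → m < w s' →
    ∃ t, s ≤ t ∧ t < s' ∧ w t ≤ m ∧ m < w (t + 1) := by
  intro s'
  induction s' with
  | zero =>
    intro s h1 h2 h3
    obtain rfl : s = 0 := by omega
    omega
  | succ q ih =>
    intro s hs h1 h3
    have hsq : s ≤ q := by
      rcases Nat.eq_or_lt_of_le hs with h | h
      · subst h; omega
      · omega
    by_cases hq : w q ≤ m
    · exact ⟨q, hsq, Nat.lt_succ_self q, hq, h3⟩
    · obtain ⟨t, ht1, ht2, ht3, ht4⟩ := ih s hsq h1 (by omega)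
      exact ⟨t, ht1, by omega, ht3, ht4⟩

lemma diag_inf_iff (k : ℤ) (e : (ℤ × ℤ) × (ℤ × ℤ)) :
    diagOf e = infDiag (k, -k) ↔
      (e.1 = (k, -k) ∧ e.2 = (k + 1, -k + 1)) ∨ (e.1 = (k + 1, -k + 1) ∧ e.2 = (k, -k)) := by
  unfold diagOf infDiag
  rw [Sym2.eq_iff]

lemma diag_sup_iff (k : ℤ) (e : (ℤ × ℤ) × (ℤ × ℤ)) :
    diagOf e = supDiag (k, -k) ↔
      (e.1 = (k, -k + 1) ∧ e.2 = (k + 1, -k)) ∨ (e.1 = (k + 1, -k) ∧ e.2 = (k, -k + 1)) := by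
  unfold diagOf supDiag
  rw [Sym2.eq_iff]


/-- For every `n ≥ 3`, the descending staircase `E_n` is not strongly brodable. -/
theorem staircase_not_stronglyBrodable (n : ℕ) (hn : 3 ≤ n) :
    ¬ StronglyBrodable (staircase n) := by
  rintro ⟨d, ⟨⟨h1, h2, h3, h4, h5⟩, hcl⟩⟩
  have hinj : Function.Injective (fun i : ℕ => ((i : ℤ), -(i : ℤ))) := by
    intro a b hab
    have h := congrArg Prod.fst hab
    simp only at h
    exact_mod_cast h
  have hcard : (staircase n).card = n := by
    rw [staircase, Finset.card_image_of_injective _ hinj, Finset.card_range]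
  rw [hcard] at h1 h2 h3 h4 h5 hcl
  have hmem : ∀ k : ℕ, k < n → ((k : ℤ), -(k : ℤ)) ∈ staircase n := fun k hk =>
    Finset.mem_image.mpr ⟨k, Finset.mem_range.mpr hk, rfl⟩
  have hmem' : ∀ c ∈ staircase n, ∃ k : ℕ, k < n ∧ c = ((k : ℤ), -(k : ℤ)) := by
    intro c hc
    rcases Finset.mem_image.mp hc with ⟨k, hk, rfl⟩
    exact ⟨k, Finset.mem_range.mp hk, rfl⟩
  have sumInf : ∀ (p : ℕ) (k : ℤ), diagOf (d p) = infDiag (k, -k) →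
      ((d p).1.1 + (d p).1.2) % 2 = 0 ∧ ((d p).2.1 + (d p).2.2) % 2 = 0 := by
    intro p k h
    rcases (diag_inf_iff k (d p)).1 h with ⟨ha, hb⟩ | ⟨ha, hb⟩ <;>
      rw [ha, hb] <;> constructor <;> simp <;> omega
  have sumSup : ∀ (p : ℕ) (k : ℤ), diagOf (d p) = supDiag (k, -k) →
      (d p).1.1 + (d p).1.2 = 1 ∧ (d p).2.1 + (d p).2.2 = 1 := by
    intro p k h
    rcases (diag_sup_iff k (d p)).1 h with ⟨ha, hb⟩ | ⟨ha, hb⟩ <;>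
      rw [ha, hb] <;> constructor <;> simp <;> omega
  have type0 : ∃ k : ℕ, k < n ∧ diagOf (d 0) = infDiag ((k : ℤ), -(k : ℤ)) := by
    obtain ⟨c, hc, hdc⟩ := h1 0 (by omega)
    obtain ⟨k, hk, rfl⟩ := hmem' c hc
    rcases hdc with hi | hs
    · exact ⟨k, hk, hi⟩
    · exfalso
      obtain ⟨i, ⟨hi1, hi2⟩, _⟩ := h2 _ hc
      exact absurd (h4 _ hc i 0 hi1 (by omega) hi2 hs) (by omega)
  have type : ∀ p, p < 2 * n →
      (p % 2 = 0 ∧ ∃ k : ℕ, k < n ∧ diagOf (d p) = infDiag ((k : ℤ), -(k : ℤ))) ∨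
      (p % 2 = 1 ∧ ∃ k : ℕ, k < n ∧ diagOf (d p) = supDiag ((k : ℤ), -(k : ℤ))) := by
    intro p
    induction p with
    | zero => intro _; exact Or.inl ⟨rfl, type0⟩
    | succ q ih =>
      intro hq1
      obtain ⟨c, hc, hdc⟩ := h1 (q + 1) hq1
      obtain ⟨k, hk, rfl⟩ := hmem' c hc
      have hadj := adj_sum_parity _ _ (h5 q hq1)
      rcases ih (by omega) with ⟨hpe, k', hk', hq'⟩ | ⟨hpo, k', hk', hq'⟩
      · have hend := (sumInf q _ hq').2
        rcases hdc with hi | hs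
        · have := (sumInf (q + 1) _ hi).1; omega
        · exact Or.inr ⟨by omega, k, hk, hs⟩
      · have hend := (sumSup q _ hq').2
        rcases hdc with hi | hs
        · exact Or.inl ⟨by omega, k, hk, hi⟩
        · have := (sumSup (q + 1) _ hs).1; omega
  have uInf : ∀ (k : ℕ), k < n → ∀ p q, p < 2 * n → q < 2 * n →
      diagOf (d p) = infDiag ((k : ℤ), -(k : ℤ)) →
      diagOf (d q) = infDiag ((k : ℤ), -(k : ℤ)) → p = q := by
    intro k hk p q hp hq hdp hdq
    obtain ⟨i, _, hiu⟩ := h2 _ (hmem k hk)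
    rw [hiu p ⟨hp, hdp⟩, hiu q ⟨hq, hdq⟩]
  have uSup : ∀ (k : ℕ), k < n → ∀ p q, p < 2 * n → q < 2 * n →
      diagOf (d p) = supDiag ((k : ℤ), -(k : ℤ)) →
      diagOf (d q) = supDiag ((k : ℤ), -(k : ℤ)) → p = q := by
    intro k hk p q hp hq hdp hdq
    obtain ⟨i, _, hiu⟩ := h3 _ (hmem k hk)
    rw [hiu p ⟨hp, hdp⟩, hiu q ⟨hq, hdq⟩]
  set w : ℕ → ℤ := fun p => if p % 2 = 1 then (d p).1.1
    else if p = 0 ∨ p = 2 * n then (d (2 * n - 1)).2.1 else (d (p - 1)).2.1 with hw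
  have wodd : ∀ p, p % 2 = 1 → w p = (d p).1.1 := by
    intro p hp; simp only [hw]; rw [if_pos hp]
  have wsucc_odd : ∀ p, p % 2 = 1 → p + 1 ≤ 2 * n → w (p + 1) = (d p).2.1 := by
    intro p hp hple
    simp only [hw]
    rw [if_neg (by omega)]
    by_cases h2n : p + 1 = 2 * n
    · rw [if_pos (Or.inr h2n)]
      have : 2 * n - 1 = p := by omega
      rw [this]
    · rw [if_neg (by omega)]
      have : p + 1 - 1 = p := by omega
      rw [this]
  have weven0 : w 0 = (d (2 * n - 1)).2.1 := by
    simp only [hw]; norm_num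
  have weven : ∀ p, p % 2 = 0 → 0 < p → p < 2 * n → w p = (d (p - 1)).2.1 := by
    intro p hp h0 hlt; simp only [hw]; rw [if_neg (by omega), if_neg (by omega)]
  have w2n : w (2 * n) = w 0 := by
    simp only [hw]
    norm_num [Nat.mul_mod_right]
  have stepOdd : ∀ (p : ℕ) (k : ℕ), p < 2 * n → p % 2 = 1 →
      diagOf (d p) = supDiag ((k : ℤ), -(k : ℤ)) →
      (w p = (k : ℤ) ∧ w (p + 1) = (k : ℤ) + 1) ∨ (w p = (k : ℤ) + 1 ∧ w (p + 1) = (k : ℤ)) := by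
    intro p k hp hpo hd
    rw [wodd p hpo, wsucc_odd p hpo (by omega)]
    rcases (diag_sup_iff _ _).1 hd with ⟨ha, hb⟩ | ⟨ha, hb⟩
    · left; rw [ha, hb]; exact ⟨rfl, rfl⟩
    · right; rw [ha, hb]; exact ⟨rfl, rfl⟩
  have hPrevAdj : ∀ p, p % 2 = 0 → p < 2 * n → ∃ m : ℤ, w p = m ∧ Adj (m, -m + 1) (d p).1 := by
    intro p hp hlt
    by_cases h0 : p = 0
    · subst h0
      rcases type (2 * n - 1) (by omega) with ⟨he, _⟩ | ⟨_, k', hk', hs⟩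
      · omega
      rcases (diag_sup_iff _ _).1 hs with ⟨_, hb⟩ | ⟨_, hb⟩
      · refine ⟨(k' : ℤ) + 1, by rw [weven0, hb], ?_⟩
        have hpair : (((k' : ℤ) + 1), -((k' : ℤ) + 1) + 1) = (((k' : ℤ) + 1), -(k' : ℤ)) := by
          simp [Prod.ext_iff]
        rw [hpair, ← hb]
        exact hcl
      · refine ⟨(k' : ℤ), by rw [weven0, hb], ?_⟩
        rw [← hb]
        exact hcl
    · have hpm : (p - 1) % 2 = 1 := by omega
      rcases type (p - 1) (by omega) with ⟨he, _⟩ | ⟨_, k', hk', hs⟩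
      · omega
      have hadj := h5 (p - 1) (by omega)
      have hp1 : p - 1 + 1 = p := by omega
      rw [hp1] at hadj
      rcases (diag_sup_iff _ _).1 hs with ⟨_, hb⟩ | ⟨_, hb⟩
      · refine ⟨(k' : ℤ) + 1, by rw [weven p hp (by omega) hlt, hb], ?_⟩
        have hpair : (((k' : ℤ) + 1), -((k' : ℤ) + 1) + 1) = (((k' : ℤ) + 1), -(k' : ℤ)) := by
          simp [Prod.ext_iff]
        rw [hpair, ← hb]
        exact hadj
      · refine ⟨(k' : ℤ), by rw [weven p hp (by omega) hlt, hb], ?_⟩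
        rw [← hb]
        exact hadj
  have hNextAdj : ∀ p, p % 2 = 0 → p < 2 * n → ∃ m : ℤ, w (p + 1) = m ∧ Adj (d p).2 (m, -m + 1) := by
    intro p hp hlt
    have hp1 : p + 1 < 2 * n := by omega
    rcases type (p + 1) hp1 with ⟨he, _⟩ | ⟨_, k', hk', hs⟩
    · omega
    have hadj := h5 p hp1
    rcases (diag_sup_iff _ _).1 hs with ⟨ha, _⟩ | ⟨ha, _⟩
    · refine ⟨(k' : ℤ), by rw [wodd (p + 1) (by omega), ha], ?_⟩
      rw [← ha]
      exact hadj
    · refine ⟨(k' : ℤ) + 1, by rw [wodd (p + 1) (by omega), ha], ?_⟩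
      have hpair : (((k' : ℤ) + 1), -((k' : ℤ) + 1) + 1) = (((k' : ℤ) + 1), -(k' : ℤ)) := by
        simp [Prod.ext_iff]
      rw [hpair, ← ha]
      exact hadj
  have stepEven : ∀ (p : ℕ) (k : ℕ), p < 2 * n → p % 2 = 0 →
      diagOf (d p) = infDiag ((k : ℤ), -(k : ℤ)) →
      (w p = (k : ℤ) ∨ w p = (k : ℤ) + 1) ∧ (w (p + 1) = (k : ℤ) ∨ w (p + 1) = (k : ℤ) + 1) := by
    intro p k hp hpe hd
    obtain ⟨m1, hm1, hadj1⟩ := hPrevAdj p hpe hp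
    obtain ⟨m2, hm2, hadj2⟩ := hNextAdj p hpe hp
    rcases (diag_inf_iff _ _).1 hd with ⟨ha, hb⟩ | ⟨ha, hb⟩
    · rw [ha] at hadj1
      rw [hb] at hadj2
      constructor
      · rw [hm1]
        rcases adj_pin1 (k : ℤ) m1 (adj_comm' _ _ hadj1) with h | h
        · exact Or.inl h
        · exact Or.inr h
      · rw [hm2]
        rcases adj_pin2 (k : ℤ) m2 hadj2 with h | h
        · exact Or.inl h
        · exact Or.inr h
    · rw [ha] at hadj1
      rw [hb] at hadj2
      constructor
      · rw [hm1]
        rcases adj_pin2 (k : ℤ) m1 (adj_comm' _ _ hadj1) with h | h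
        · exact Or.inl h
        · exact Or.inr h
      · rw [hm2]
        rcases adj_pin1 (k : ℤ) m2 hadj2 with h | h
        · exact Or.inl h
        · exact Or.inr h
  have infEven : ∀ (p : ℕ) (k : ℕ), p < 2 * n → diagOf (d p) = infDiag ((k : ℤ), -(k : ℤ)) →
      p % 2 = 0 := by
    intro p k hp hd
    rcases type p hp with ⟨he, _⟩ | ⟨ho, k', hk', hs⟩
    · exact he
    · have hx := (sumSup p _ hs).1
      have hy := (sumInf p _ hd).1
      omega
  have cut : ∀ (k : ℕ), k < n → ∀ a, a < 2 * n → diagOf (d a) = infDiag ((k : ℤ), -(k : ℤ)) →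
      (w a = (k : ℤ) ∧ w (a + 1) = (k : ℤ) + 1) ∨ (w a = (k : ℤ) + 1 ∧ w (a + 1) = (k : ℤ)) := by
    intro k hk a ha hda
    obtain ⟨b, ⟨hb1, hb2⟩, _⟩ := h3 _ (hmem k hk)
    have hab : a < b := h4 _ (hmem k hk) a b ha hb1 hda hb2
    set χ : ℤ → ZMod 2 := fun v => if v ≤ (k : ℤ) then 0 else 1 with hχ
    have tele : ∑ p ∈ Finset.range (2 * n), (χ (w (p + 1)) - χ (w p)) = 0 := by
      rw [Finset.sum_range_sub (fun p => χ (w p)), w2n, sub_self]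
    have hsub : ({a, b} : Finset ℕ) ⊆ Finset.range (2 * n) := by
      intro x hx
      rcases Finset.mem_insert.mp hx with rfl | hx
      · exact Finset.mem_range.mpr ha
      · rw [Finset.mem_singleton.mp hx]; exact Finset.mem_range.mpr hb1
    have chi_eq : ∀ (j : ℕ), j ≠ k → ∀ x y : ℤ, (x = (j : ℤ) ∨ x = (j : ℤ) + 1) →
        (y = (j : ℤ) ∨ y = (j : ℤ) + 1) → χ x = χ y := by
      intro j hj x y hx hy
      have hjk : (j : ℤ) ≠ (k : ℤ) := by exact_mod_cast hj
      simp only [hχ]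
      rcases hx with rfl | rfl <;> rcases hy with rfl | rfl <;> split_ifs <;>
        first | rfl | (exfalso; omega)
    have hvan : ∀ p ∈ Finset.range (2 * n), p ∉ ({a, b} : Finset ℕ) →
        χ (w (p + 1)) - χ (w p) = 0 := by
      intro p hp hpn
      have hplt := Finset.mem_range.mp hp
      simp only [Finset.mem_insert, Finset.mem_singleton] at hpn
      push_neg at hpn
      rcases type p hplt with ⟨hpe, j, hj, hdj⟩ | ⟨hpo, j, hj, hdj⟩
      · have hjk : j ≠ k := by
          intro hh
          subst hh
          exact hpn.1 (uInf j hj p a hplt ha hdj hda)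
        obtain ⟨hw1, hw2⟩ := stepEven p j hplt hpe hdj
        rw [chi_eq j hjk _ _ hw2 hw1]
        exact sub_self _
      · have hjk : j ≠ k := by
          intro hh
          subst hh
          exact hpn.2 (uSup j hj p b hplt hb1 hdj hb2)
        rcases stepOdd p j hplt hpo hdj with ⟨x1, x2⟩ | ⟨x1, x2⟩
        · rw [chi_eq j hjk _ _ (Or.inr x2) (Or.inl x1)]
          exact sub_self _
        · rw [chi_eq j hjk _ _ (Or.inl x2) (Or.inr x1)]
          exact sub_self _
    have hpair : χ (w (a + 1)) - χ (w a) + (χ (w (b + 1)) - χ (w b)) = 0 := by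
      have h' := Finset.sum_subset hsub hvan
      rw [Finset.sum_pair (show a ≠ b by omega)] at h'
      exact h'.trans tele
    have hbo : b % 2 = 1 := by
      rcases type b hb1 with ⟨hbe, j, hj, hdj⟩ | ⟨hbo, _⟩
      · have hx := (sumInf b _ hdj).1
        have hy := (sumSup b _ hb2).1
        omega
      · exact hbo
    have hdb : χ (w (b + 1)) - χ (w b) = 1 := by
      rcases stepOdd b k hb1 hbo hb2 with ⟨x1, x2⟩ | ⟨x1, x2⟩
      · rw [x1, x2]
        simp only [hχ]
        rw [if_neg (by omega : ¬ (k : ℤ) + 1 ≤ (k : ℤ)), if_pos (le_refl (k : ℤ))]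
        decide
      · rw [x1, x2]
        simp only [hχ]
        rw [if_neg (by omega : ¬ (k : ℤ) + 1 ≤ (k : ℤ)), if_pos (le_refl (k : ℤ))]
        decide
    have hdaa : χ (w (a + 1)) - χ (w a) = 1 := by
      rw [hdb] at hpair
      have := eq_neg_of_add_eq_zero_left hpair
      rw [this]
      decide
    have hae : a % 2 = 0 := infEven a k ha hda
    obtain ⟨hw1, hw2⟩ := stepEven a k ha hae hda
    rcases hw1 with e1 | e1 <;> rcases hw2 with e2 | e2
    · exfalso
      rw [e1, e2, sub_self] at hdaa
      exact absurd hdaa (by decide)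
    · exact Or.inl ⟨e1, e2⟩
    · exact Or.inr ⟨e1, e2⟩
    · exfalso
      rw [e1, e2, sub_self] at hdaa
      exact absurd hdaa (by decide)
  have step : ∀ p, p < 2 * n → ∃ j : ℕ, j < n ∧
      ((w p = (j : ℤ) ∧ w (p + 1) = (j : ℤ) + 1) ∨ (w p = (j : ℤ) + 1 ∧ w (p + 1) = (j : ℤ))) ∧
      ∃ q, q ≤ p ∧ q < 2 * n ∧ diagOf (d q) = infDiag ((j : ℤ), -(j : ℤ)) := by
    intro p hp
    rcases type p hp with ⟨hpe, j, hj, hdj⟩ | ⟨hpo, j, hj, hdj⟩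
    · exact ⟨j, hj, cut j hj p hp hdj, p, le_refl p, hp, hdj⟩
    · obtain ⟨q, ⟨hq1, hq2⟩, _⟩ := h2 _ (hmem j hj)
      have hqp : q < p := h4 _ (hmem j hj) q p hq1 hp hq2 hdj
      exact ⟨j, hj, stepOdd p j hp hpo hdj, q, by omega, hq1, hq2⟩
  have wpar : ∀ p, p ≤ 2 * n → (w p - w 0 - (p : ℤ)) % 2 = 0 := by
    intro p
    induction p with
    | zero => intro _; simp
    | succ q ih =>
      intro hq
      obtain ⟨j, _, hcr, _⟩ := step q (by omega)
      have ihq := ih (by omega)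
      push_cast
      push_cast at ihq
      rcases hcr with ⟨x1, x2⟩ | ⟨x1, x2⟩ <;> omega
  have pairContr : ∀ (k : ℕ), k + 1 < n → ∀ aL aH, aL < 2 * n → aH < 2 * n →
      diagOf (d aL) = infDiag ((k : ℤ), -(k : ℤ)) →
      diagOf (d aH) = infDiag (((k + 1 : ℕ) : ℤ), -((k + 1 : ℕ) : ℤ)) →
      w aL = (k : ℤ) → w aH = (k : ℤ) + 2 → False := by
    intro k hk aL aH hL hH hdL hdH hwL hwH
    rcases Nat.lt_or_ge aL aH with hlt | hge
    · obtain ⟨t, ht1, ht2, ht3, ht4⟩ := ladder w ((k : ℤ) + 1) aH aL (le_of_lt hlt)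
        (by omega) (by omega)
      obtain ⟨j, hj, hcr, q, hq1, hq2, hq3⟩ := step t (by omega)
      have hjk : (j : ℤ) = (k : ℤ) + 1 := by
        rcases hcr with ⟨y1, y2⟩ | ⟨y1, y2⟩ <;> omega
      have hjk' : j = k + 1 := by exact_mod_cast hjk
      subst hjk'
      have hqa : q = aH := uInf (k + 1) hk q aH hq2 hH hq3 hdH
      omega
    · have hne : aL ≠ aH := by
        intro h
        rw [h, hwH] at hwL
        omega
      have hlt : aH < aL := by omega
      obtain ⟨t, ht1, ht2, ht3, ht4⟩ := ladder (fun p => - w p) (-(k : ℤ) - 1) aL aH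
        (le_of_lt hlt) (by show -w aH ≤ -(k : ℤ) - 1; omega)
        (by show -(k : ℤ) - 1 < -w aL; omega)
      have ht3' : -w t ≤ -(k : ℤ) - 1 := ht3
      have ht4' : -(k : ℤ) - 1 < -w (t + 1) := ht4
      obtain ⟨j, hj, hcr, q, hq1, hq2, hq3⟩ := step t (by omega)
      have hjk : (j : ℤ) = (k : ℤ) := by
        rcases hcr with ⟨y1, y2⟩ | ⟨y1, y2⟩ <;> omega
      have hjk' : j = k := by exact_mod_cast hjk
      subst hjk'
      have hqa : q = aL := uInf j (by omega) q aL hq2 hL hq3 hdL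
      omega
  obtain ⟨a0, ⟨ha0, hd0⟩, _⟩ := h2 _ (hmem 0 (by omega))
  obtain ⟨a1, ⟨ha1, hd1⟩, _⟩ := h2 _ (hmem 1 (by omega))
  obtain ⟨a2, ⟨ha2, hd2⟩, _⟩ := h2 _ (hmem 2 (by omega))
  have hc0 := cut 0 (by omega) a0 ha0 hd0
  have hc1 := cut 1 (by omega) a1 ha1 hd1
  have hc2 := cut 2 (by omega) a2 ha2 hd2
  have hp0 := wpar a0 (by omega)
  have hp1 := wpar a1 (by omega)
  have hp2 := wpar a2 (by omega)
  have he0 : a0 % 2 = 0 := infEven a0 0 ha0 hd0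
  have he1 : a1 % 2 = 0 := infEven a1 1 ha1 hd1
  have he2 : a2 % 2 = 0 := infEven a2 2 ha2 hd2
  push_cast at hc0 hc1 hc2
  rcases hc0 with ⟨x0, x0'⟩ | ⟨x0, x0'⟩
  · have hw1 : w a1 = 2 := by
      rcases hc1 with ⟨y, _⟩ | ⟨y, _⟩ <;> omega
    exact pairContr 0 (by omega) a0 a1 ha0 ha1 hd0 (by exact_mod_cast hd1)
      (by exact_mod_cast x0) (by push_cast; omega)
  · have hw1 : w a1 = 1 := by
      rcases hc1 with ⟨y, _⟩ | ⟨y, _⟩ <;> omega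
    have hw2 : w a2 = 3 := by
      rcases hc2 with ⟨y, _⟩ | ⟨y, _⟩ <;> omega
    exact pairContr 1 (by omega) a1 a2 ha1 ha2 hd1 (by exact_mod_cast hd2)
      (by push_cast; omega) (by push_cast; omega)
end

section
/- For every p ≥ 2, the staircase with landing E_{1,p,1} is strongly brodable. -/
/-- The staircase with landing `E_{g,p,d}`:
`{(i, −i) : 0 ≤ i ≤ g−1} ∪ {(g−1+j, −g) : 1 ≤ j ≤ p} ∪ {(g+p+k−1, −g−k) : 1 ≤ k ≤ d}`. -/
def stairLanding (g p d : ℕ) : Finset (ℤ × ℤ) :=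
  (Finset.range g).image (fun i : ℕ => ((i : ℤ), -(i : ℤ))) ∪
  (Finset.range p).image (fun j : ℕ => ((g : ℤ) + j, -(g : ℤ))) ∪
  (Finset.range d).image (fun k : ℕ => ((g : ℤ) + p + k, -(g : ℤ) - 1 - k))

lemma infDiag_inj_s10 {a b : ℤ × ℤ} (h : infDiag a = infDiag b) : a = b := by
  rw [infDiag, infDiag, Sym2.eq_iff] at h
  obtain ⟨h1, _⟩ | ⟨h1, h2⟩ := h
  · exact h1
  · rw [Prod.ext_iff] at h1 h2 ⊢
    simp at h1 h2
    omega

lemma supDiag_inj_s10 {a b : ℤ × ℤ} (h : supDiag a = supDiag b) : a = b := by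
  rw [supDiag, supDiag, Sym2.eq_iff] at h
  obtain ⟨h1, h2⟩ | ⟨h1, h2⟩ := h <;>
  · simp [Prod.ext_iff] at h1 h2
    rw [Prod.ext_iff]
    omega

lemma inf_ne_sup_s10 {a b : ℤ × ℤ} : infDiag a ≠ supDiag b := by
  rw [infDiag, supDiag]
  intro h
  rw [Sym2.eq_iff] at h
  obtain ⟨h1, h2⟩ | ⟨h1, h2⟩ := h <;>
  · simp [Prod.ext_iff] at h1 h2
    omega

lemma mem_stair (p : ℕ) (c : ℤ × ℤ) :
    c ∈ stairLanding 1 p 1 ↔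
      c = ((0:ℤ), 0) ∨ (∃ j : ℕ, j < p ∧ c = (1 + (j:ℤ), -1)) ∨ c = ((p:ℤ) + 1, -2) := by
  simp only [stairLanding, Finset.mem_union, Finset.mem_image, Finset.mem_range]
  constructor
  · rintro ((⟨i, hi, rfl⟩ | ⟨j, hj, rfl⟩) | ⟨k, hk, rfl⟩)
    · left; interval_cases i; simp
    · right; left; exact ⟨j, hj, by norm_num⟩
    · right; right; interval_cases k; rw [Prod.ext_iff]; norm_num; ring
  · rintro (rfl | ⟨j, hj, rfl⟩ | rfl)
    · left; left; exact ⟨0, by omega, by simp⟩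
    · left; right; exact ⟨j, hj, by norm_num⟩
    · right; exact ⟨0, by omega, by rw [Prod.ext_iff]; norm_num; ring⟩

lemma card_stair (p : ℕ) : (stairLanding 1 p 1).card = p + 2 := by
  have h1 : stairLanding 1 p 1 =
      insert ((0:ℤ), (0:ℤ)) (insert ((p:ℤ) + 1, (-2:ℤ))
        ((Finset.range p).image (fun j : ℕ => (1 + (j:ℤ), (-1:ℤ))))) := by
    ext c
    simp only [mem_stair, Finset.mem_insert, Finset.mem_image, Finset.mem_range]
    constructor
    · rintro (rfl | ⟨j, hj, rfl⟩ | rfl)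
      · left; rfl
      · right; right; exact ⟨j, hj, rfl⟩
      · right; left; rfl
    · rintro (rfl | rfl | ⟨j, hj, rfl⟩)
      · left; rfl
      · right; right; rfl
      · right; left; exact ⟨j, hj, rfl⟩
  have hinj : Function.Injective (fun j : ℕ => (1 + (j:ℤ), (-1:ℤ))) := by
    intro a b hab
    simp [Prod.ext_iff] at hab
    omega
  have hn1 : ((p:ℤ) + 1, (-2:ℤ)) ∉
      (Finset.range p).image (fun j : ℕ => (1 + (j:ℤ), (-1:ℤ))) := by
    simp [Prod.ext_iff]
  have hn0 : ((0:ℤ), (0:ℤ)) ∉ insert ((p:ℤ) + 1, (-2:ℤ))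
      ((Finset.range p).image (fun j : ℕ => (1 + (j:ℤ), (-1:ℤ)))) := by
    simp [Prod.ext_iff]
  rw [h1, Finset.card_insert_of_notMem hn0, Finset.card_insert_of_notMem hn1,
    Finset.card_image_of_injective _ hinj, Finset.card_range]

def eseq (p : ℕ) (i : ℕ) : (ℤ × ℤ) × (ℤ × ℤ) :=
  if i = 0 then (((0:ℤ), (0:ℤ)), ((1:ℤ), (1:ℤ)))
  else if i = 1 then (((0:ℤ), (1:ℤ)), ((1:ℤ), (0:ℤ)))
  else if i ≤ p + 1 then (((i:ℤ) - 1, -1), ((i:ℤ), 0))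
  else if i = p + 2 then (((p:ℤ), 0), ((p:ℤ) + 1, -1))
  else if i = p + 3 then (((p:ℤ) + 1, -2), ((p:ℤ) + 2, -1))
  else if i = p + 4 then (((p:ℤ) + 2, -2), ((p:ℤ) + 1, -1))
  else ((2 * (p:ℤ) + 5 - i, -1), (2 * (p:ℤ) + 4 - i, 0))

lemma eseq_zero (p : ℕ) : eseq p 0 = (((0:ℤ), (0:ℤ)), ((1:ℤ), (1:ℤ))) := by simp [eseq]
lemma eseq_one (p : ℕ) : eseq p 1 = (((0:ℤ), (1:ℤ)), ((1:ℤ), (0:ℤ))) := by simp [eseq]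
lemma eseq_mid (p i : ℕ) (h2 : 2 ≤ i) (h : i ≤ p + 1) :
    eseq p i = (((i:ℤ) - 1, -1), ((i:ℤ), 0)) := by
  rw [eseq, if_neg (by omega), if_neg (by omega), if_pos h]
lemma eseq_p2 (p : ℕ) : eseq p (p + 2) = (((p:ℤ), 0), ((p:ℤ) + 1, -1)) := by
  rw [eseq, if_neg (by omega), if_neg (by omega), if_neg (by omega), if_pos rfl]
lemma eseq_p3 (p : ℕ) : eseq p (p + 3) = (((p:ℤ) + 1, -2), ((p:ℤ) + 2, -1)) := by
  rw [eseq, if_neg (by omega), if_neg (by omega), if_neg (by omega), if_neg (by omega),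
    if_pos rfl]
lemma eseq_p4 (p : ℕ) : eseq p (p + 4) = (((p:ℤ) + 2, -2), ((p:ℤ) + 1, -1)) := by
  rw [eseq, if_neg (by omega), if_neg (by omega), if_neg (by omega), if_neg (by omega),
    if_neg (by omega), if_pos rfl]
lemma eseq_late (p i : ℕ) (h : p + 5 ≤ i) :
    eseq p i = ((2 * (p:ℤ) + 5 - i, -1), (2 * (p:ℤ) + 4 - i, 0)) := by
  rw [eseq, if_neg (by omega), if_neg (by omega), if_neg (by omega), if_neg (by omega),
    if_neg (by omega), if_neg (by omega)]

lemma diag_zero (p : ℕ) : diagOf (eseq p 0) = infDiag ((0:ℤ), 0) := by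
  rw [eseq_zero]; rfl
lemma diag_one (p : ℕ) : diagOf (eseq p 1) = supDiag ((0:ℤ), 0) := by
  rw [eseq_one]; rfl
lemma diag_mid (p i : ℕ) (h2 : 2 ≤ i) (h : i ≤ p + 1) :
    diagOf (eseq p i) = infDiag (((i:ℤ) - 1), -1) := by
  rw [eseq_mid p i h2 h, diagOf, infDiag, Sym2.eq_iff]
  left
  constructor <;> rw [Prod.ext_iff] <;> constructor <;> ring
lemma diag_p2 (p : ℕ) : diagOf (eseq p (p + 2)) = supDiag ((p:ℤ), -1) := by
  rw [eseq_p2, diagOf, supDiag, Sym2.eq_iff]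
  left
  constructor <;> rw [Prod.ext_iff] <;> constructor <;> ring
lemma diag_p3 (p : ℕ) : diagOf (eseq p (p + 3)) = infDiag ((p:ℤ) + 1, -2) := by
  rw [eseq_p3, diagOf, infDiag, Sym2.eq_iff]
  left
  constructor <;> rw [Prod.ext_iff] <;> constructor <;> ring
lemma diag_p4 (p : ℕ) : diagOf (eseq p (p + 4)) = supDiag ((p:ℤ) + 1, -2) := by
  rw [eseq_p4, diagOf, supDiag, Sym2.eq_iff]
  right
  constructor <;> rw [Prod.ext_iff] <;> constructor <;> ring
lemma diag_late (p i : ℕ) (h : p + 5 ≤ i) :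
    diagOf (eseq p i) = supDiag (2 * (p:ℤ) + 4 - i, -1) := by
  rw [eseq_late p i h, diagOf, supDiag, Sym2.eq_iff]
  right
  constructor <;> rw [Prod.ext_iff] <;> constructor <;> ring

lemma eseq_diag (p i : ℕ) (hi : i < 2 * p + 4) :
    (i = 0 ∧ diagOf (eseq p i) = infDiag ((0:ℤ), 0)) ∨
    (i = 1 ∧ diagOf (eseq p i) = supDiag ((0:ℤ), 0)) ∨
    (2 ≤ i ∧ i ≤ p + 1 ∧ diagOf (eseq p i) = infDiag (((i:ℤ) - 1), -1)) ∨
    (i = p + 2 ∧ diagOf (eseq p i) = supDiag ((p:ℤ), -1)) ∨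
    (i = p + 3 ∧ diagOf (eseq p i) = infDiag ((p:ℤ) + 1, -2)) ∨
    (i = p + 4 ∧ diagOf (eseq p i) = supDiag ((p:ℤ) + 1, -2)) ∨
    (p + 5 ≤ i ∧ i ≤ 2 * p + 3 ∧ diagOf (eseq p i) = supDiag (2 * (p:ℤ) + 4 - i, -1)) := by
  rcases Nat.lt_or_ge i 2 with h | h
  · interval_cases i
    · exact Or.inl ⟨rfl, diag_zero p⟩
    · exact Or.inr (Or.inl ⟨rfl, diag_one p⟩)
  rcases Nat.lt_or_ge i (p + 2) with h' | h'
  · exact Or.inr (Or.inr (Or.inl ⟨h, by omega, diag_mid p i h (by omega)⟩))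
  rcases Nat.lt_or_ge i (p + 5) with h'' | h''
  · rcases (by omega : i = p + 2 ∨ i = p + 3 ∨ i = p + 4) with rfl | rfl | rfl
    · exact Or.inr (Or.inr (Or.inr (Or.inl ⟨rfl, diag_p2 p⟩)))
    · exact Or.inr (Or.inr (Or.inr (Or.inr (Or.inl ⟨rfl, diag_p3 p⟩))))
    · exact Or.inr (Or.inr (Or.inr (Or.inr (Or.inr (Or.inl ⟨rfl, diag_p4 p⟩)))))
  · exact Or.inr (Or.inr (Or.inr (Or.inr (Or.inr (Or.inr ⟨h'', by omega, diag_late p i h''⟩)))))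

lemma inf_index (p i : ℕ) (c : ℤ × ℤ) (hi : i < 2 * p + 4)
    (h : diagOf (eseq p i) = infDiag c) :
    (i = 0 ∧ c = ((0:ℤ), 0)) ∨
    (2 ≤ i ∧ i ≤ p + 1 ∧ c = (((i:ℤ) - 1), -1)) ∨
    (i = p + 3 ∧ c = ((p:ℤ) + 1, -2)) := by
  rcases eseq_diag p i hi with ⟨h1, h2⟩ | ⟨h1, h2⟩ | ⟨h1, h1', h2⟩ | ⟨h1, h2⟩ |
    ⟨h1, h2⟩ | ⟨h1, h2⟩ | ⟨h1, h1', h2⟩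
  · exact Or.inl ⟨h1, (infDiag_inj_s10 (h.symm.trans h2))⟩
  · exact absurd (h2.symm.trans h) inf_ne_sup_s10.symm
  · exact Or.inr (Or.inl ⟨h1, h1', (infDiag_inj_s10 (h.symm.trans h2))⟩)
  · exact absurd (h2.symm.trans h) inf_ne_sup_s10.symm
  · exact Or.inr (Or.inr ⟨h1, (infDiag_inj_s10 (h.symm.trans h2))⟩)
  · exact absurd (h2.symm.trans h) inf_ne_sup_s10.symm
  · exact absurd (h2.symm.trans h) inf_ne_sup_s10.symm

lemma sup_index (p i : ℕ) (c : ℤ × ℤ) (hi : i < 2 * p + 4)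
    (h : diagOf (eseq p i) = supDiag c) :
    (i = 1 ∧ c = ((0:ℤ), 0)) ∨
    (i = p + 2 ∧ c = ((p:ℤ), -1)) ∨
    (i = p + 4 ∧ c = ((p:ℤ) + 1, -2)) ∨
    (p + 5 ≤ i ∧ i ≤ 2 * p + 3 ∧ c = (2 * (p:ℤ) + 4 - i, -1)) := by
  rcases eseq_diag p i hi with ⟨h1, h2⟩ | ⟨h1, h2⟩ | ⟨h1, h1', h2⟩ | ⟨h1, h2⟩ |
    ⟨h1, h2⟩ | ⟨h1, h2⟩ | ⟨h1, h1', h2⟩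
  · exact absurd (h2.symm.trans h) inf_ne_sup_s10
  · exact Or.inl ⟨h1, (supDiag_inj_s10 (h.symm.trans h2))⟩
  · exact absurd (h2.symm.trans h) inf_ne_sup_s10
  · exact Or.inr (Or.inl ⟨h1, (supDiag_inj_s10 (h.symm.trans h2))⟩)
  · exact absurd (h2.symm.trans h) inf_ne_sup_s10
  · exact Or.inr (Or.inr (Or.inl ⟨h1, (supDiag_inj_s10 (h.symm.trans h2))⟩))
  · exact Or.inr (Or.inr (Or.inr ⟨h1, h1', (supDiag_inj_s10 (h.symm.trans h2))⟩))

/-- For every `p ≥ 2`, the staircase with landing `E_{1,p,1}` is strongly brodable. -/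
theorem stairLanding_one_one_stronglyBrodable (p : ℕ) (hp : 2 ≤ p) :
    StronglyBrodable (stairLanding 1 p 1) := by
  have hcard : 2 * (stairLanding 1 p 1).card = 2 * p + 4 := by rw [card_stair]; ring
  refine ⟨eseq p, ⟨?_, ?_, ?_, ?_, ?_⟩, ?_⟩
  · -- cover
    rw [hcard]
    intro i hi
    rcases eseq_diag p i hi with ⟨h1, h2⟩ | ⟨h1, h2⟩ | ⟨h1, h1', h2⟩ | ⟨h1, h2⟩ |
      ⟨h1, h2⟩ | ⟨h1, h2⟩ | ⟨h1, h1', h2⟩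
    · exact ⟨_, (mem_stair p _).2 (Or.inl rfl), Or.inl h2⟩
    · exact ⟨_, (mem_stair p _).2 (Or.inl rfl), Or.inr h2⟩
    · refine ⟨_, (mem_stair p _).2 (Or.inr (Or.inl ⟨i - 2, by omega, ?_⟩)), Or.inl h2⟩
      rw [Prod.mk.injEq]
      exact ⟨by omega, rfl⟩
    · refine ⟨_, (mem_stair p _).2 (Or.inr (Or.inl ⟨p - 1, by omega, ?_⟩)), Or.inr h2⟩
      rw [Prod.mk.injEq]
      exact ⟨by omega, rfl⟩
    · exact ⟨_, (mem_stair p _).2 (Or.inr (Or.inr rfl)), Or.inl h2⟩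
    · exact ⟨_, (mem_stair p _).2 (Or.inr (Or.inr rfl)), Or.inr h2⟩
    · refine ⟨_, (mem_stair p _).2 (Or.inr (Or.inl ⟨2 * p + 3 - i, by omega, ?_⟩)), Or.inr h2⟩
      rw [Prod.mk.injEq]
      exact ⟨by omega, rfl⟩
  · -- inferior diagonals, existence and uniqueness
    rw [hcard]
    intro c hc
    rcases (mem_stair p c).1 hc with rfl | ⟨j, hj, rfl⟩ | rfl
    · refine ⟨0, ⟨by omega, diag_zero p⟩, ?_⟩
      rintro y ⟨hy, hyd⟩
      rcases inf_index p y _ hy hyd with ⟨h1, h2⟩ | ⟨h1, h1', h2⟩ | ⟨h1, h2⟩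
      · exact h1
      · rw [Prod.mk.injEq] at h2; omega
      · rw [Prod.mk.injEq] at h2; omega
    · refine ⟨j + 2, ⟨by omega, ?_⟩, ?_⟩
      · rw [diag_mid p (j + 2) (by omega) (by omega)]
        congr 1
        rw [Prod.mk.injEq]
        exact ⟨by push_cast; ring, rfl⟩
      · rintro y ⟨hy, hyd⟩
        rcases inf_index p y _ hy hyd with ⟨h1, h2⟩ | ⟨h1, h1', h2⟩ | ⟨h1, h2⟩
        · rw [Prod.mk.injEq] at h2; omega
        · rw [Prod.mk.injEq] at h2; omega
        · rw [Prod.mk.injEq] at h2; omega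
    · refine ⟨p + 3, ⟨by omega, diag_p3 p⟩, ?_⟩
      rintro y ⟨hy, hyd⟩
      rcases inf_index p y _ hy hyd with ⟨h1, h2⟩ | ⟨h1, h1', h2⟩ | ⟨h1, h2⟩
      · rw [Prod.mk.injEq] at h2; omega
      · rw [Prod.mk.injEq] at h2; omega
      · exact h1
  · -- superior diagonals, existence and uniqueness
    rw [hcard]
    intro c hc
    rcases (mem_stair p c).1 hc with rfl | ⟨j, hj, rfl⟩ | rfl
    · refine ⟨1, ⟨by omega, diag_one p⟩, ?_⟩
      rintro y ⟨hy, hyd⟩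
      rcases sup_index p y _ hy hyd with ⟨h1, h2⟩ | ⟨h1, h2⟩ | ⟨h1, h2⟩ | ⟨h1, h1', h2⟩
      · exact h1
      · rw [Prod.mk.injEq] at h2; omega
      · rw [Prod.mk.injEq] at h2; omega
      · rw [Prod.mk.injEq] at h2; omega
    · by_cases hjp : j = p - 1
      · refine ⟨p + 2, ⟨by omega, ?_⟩, ?_⟩
        · rw [diag_p2 p]
          congr 1
          rw [Prod.mk.injEq]
          exact ⟨by omega, rfl⟩
        · rintro y ⟨hy, hyd⟩
          rcases sup_index p y _ hy hyd with ⟨h1, h2⟩ | ⟨h1, h2⟩ | ⟨h1, h2⟩ | ⟨h1, h1', h2⟩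
          · rw [Prod.mk.injEq] at h2; omega
          · exact h1
          · rw [Prod.mk.injEq] at h2; omega
          · rw [Prod.mk.injEq] at h2; omega
      · refine ⟨2 * p + 3 - j, ⟨by omega, ?_⟩, ?_⟩
        · rw [diag_late p (2 * p + 3 - j) (by omega)]
          congr 1
          rw [Prod.mk.injEq]
          exact ⟨by omega, rfl⟩
        · rintro y ⟨hy, hyd⟩
          rcases sup_index p y _ hy hyd with ⟨h1, h2⟩ | ⟨h1, h2⟩ | ⟨h1, h2⟩ | ⟨h1, h1', h2⟩
          · rw [Prod.mk.injEq] at h2; omega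
          · rw [Prod.mk.injEq] at h2; omega
          · rw [Prod.mk.injEq] at h2; omega
          · rw [Prod.mk.injEq] at h2; omega
    · refine ⟨p + 4, ⟨by omega, diag_p4 p⟩, ?_⟩
      rintro y ⟨hy, hyd⟩
      rcases sup_index p y _ hy hyd with ⟨h1, h2⟩ | ⟨h1, h2⟩ | ⟨h1, h2⟩ | ⟨h1, h1', h2⟩
      · rw [Prod.mk.injEq] at h2; omega
      · rw [Prod.mk.injEq] at h2; omega
      · exact h1
      · rw [Prod.mk.injEq] at h2; omega
  · -- order: inferior before superior
    rw [hcard]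
    intro c _ i j hi hj hinf hsup
    rcases inf_index p i c hi hinf with ⟨h1, h2⟩ | ⟨h1, h1', h2⟩ | ⟨h1, h2⟩ <;>
      rcases sup_index p j c hj hsup with ⟨g1, g2⟩ | ⟨g1, g2⟩ | ⟨g1, g2⟩ | ⟨g1, g1', g2⟩ <;>
      · rw [h2, Prod.mk.injEq] at g2
        omega
  · -- adjacency
    rw [hcard]
    intro i hi
    rcases (by omega : i = 0 ∨ i = 1 ∨ (2 ≤ i ∧ i ≤ p) ∨ i = p + 1 ∨ i = p + 2 ∨
        i = p + 3 ∨ i = p + 4 ∨ (p + 5 ≤ i ∧ i ≤ 2 * p + 2)) with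
      rfl | rfl | ⟨h1, h2⟩ | rfl | rfl | rfl | rfl | ⟨h1, h2⟩
    · show Adj (eseq p 0).2 (eseq p 1).1
      rw [eseq_zero, eseq_one]
      norm_num [Adj]
    · show Adj (eseq p 1).2 (eseq p 2).1
      rw [eseq_one, eseq_mid p 2 (by omega) (by omega)]
      norm_num [Adj]
    · rw [eseq_mid p i h1 (by omega), eseq_mid p (i + 1) (by omega) (by omega)]
      simp only [Adj]
      push_cast
      ring
    · show Adj (eseq p (p + 1)).2 (eseq p (p + 2)).1
      rw [eseq_mid p (p + 1) (by omega) (by omega), eseq_p2]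
      simp only [Adj]
      push_cast
      ring
    · show Adj (eseq p (p + 2)).2 (eseq p (p + 3)).1
      rw [eseq_p2, eseq_p3]
      simp only [Adj]
      ring
    · show Adj (eseq p (p + 3)).2 (eseq p (p + 4)).1
      rw [eseq_p3, eseq_p4]
      simp only [Adj]
      ring
    · show Adj (eseq p (p + 4)).2 (eseq p (p + 5)).1
      rw [eseq_p4, eseq_late p (p + 5) (by omega)]
      simp only [Adj]
      push_cast
      ring
    · rw [eseq_late p i h1, eseq_late p (i + 1) (by omega)]
      simp only [Adj]
      push_cast
      ring
  · -- closure
    rw [hcard]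
    have h1 : 2 * p + 4 - 1 = 2 * p + 3 := by omega
    rw [h1, eseq_late p (2 * p + 3) (by omega), eseq_zero]
    simp only [Adj]
    push_cast
    ring
end
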